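/- arXiv:2506.09810 — 3 statements merged into one kernel-verified Lean document; each statement's English description precedes it below -/
import Mathlib

section
/- With the optimal score s*(x, c) := log( p(c|x) / p(c) ), the shifted SoftNCE loss converges to the mutual information: lim_{N→∞} ( log N − L_N(s*) ) = I(X;C). (Third item of Proposition 2.) -/
open MeasureTheory ProbabilityTheory Filter
open scoped Classical ENNReal Topology

/-- The Kullback–Leibler divergence `KL(P‖Q) = ∫ log (dP/dQ) dP`, with value `+∞`
when `P` is not absolutely continuous with respect to `Q` (or the integral is undefined). -/
noncomputable def klDivergence {Ω : Type*} [MeasurableSpace Ω] (P Q : Measure Ω) : EReal :=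
  if P ≪ Q ∧ Integrable (fun ω => Real.log ((P.rnDeriv Q ω).toReal)) P
  then ((∫ ω, Real.log ((P.rnDeriv Q ω).toReal) ∂P : ℝ) : EReal)
  else ⊤

/-- The mutual information `I(X;C) := KL(law(X,C) ‖ law(X) ⊗ law(C))`. -/
noncomputable def mutualInfo {Ω 𝓧 𝒞 : Type*} [MeasurableSpace Ω] [MeasurableSpace 𝓧]
    [MeasurableSpace 𝒞] (μ : Measure Ω) (X : Ω → 𝓧) (C : Ω → 𝒞) : EReal :=
  klDivergence (μ.map (fun ω => (X ω, C ω))) ((μ.map X).prod (μ.map C))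

/-- The conditional law of `X` given `C = c`. -/
noncomputable def condLaw {Ω 𝓧 𝒞 : Type*} [MeasurableSpace Ω] [MeasurableSpace 𝓧]
    [MeasurableSpace 𝒞] (μ : Measure Ω) (X : Ω → 𝓧) (C : Ω → 𝒞) (c : 𝒞) : Measure 𝓧 :=
  (μ[|C ⁻¹' {c}]).map X

/-- The law `P_i` of `(X, (C_1, …, C_N))` under which `C_1, …, C_N` are i.i.d. copies of `C`
and `X` is drawn from the conditional law of `X` given `C = C_i`, conditionally
independently of the other `C_j`. -/
noncomputable def Pmeas {Ω 𝓧 𝒞 : Type*} [MeasurableSpace Ω] [MeasurableSpace 𝓧]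
    [MeasurableSpace 𝒞] (μ : Measure Ω) (X : Ω → 𝓧) (C : Ω → 𝒞) (N : ℕ) (i : Fin N) :
    Measure (𝓧 × (Fin N → 𝒞)) :=
  (Measure.pi fun _ : Fin N => μ.map C).bind
    (fun cs => (condLaw μ X C (cs i)).map (fun x => (x, cs)))

/-- The law `Q` of `(X, (C_1, …, C_N))` under which `X` has the marginal law of `X` and is
independent of `C_1, …, C_N`, which are i.i.d. copies of `C`. -/
noncomputable def Qmeas {Ω 𝓧 𝒞 : Type*} [MeasurableSpace Ω] [MeasurableSpace 𝓧]
    [MeasurableSpace 𝒞] (μ : Measure Ω) (X : Ω → 𝓧) (C : Ω → 𝒞) (N : ℕ) :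
    Measure (𝓧 × (Fin N → 𝒞)) :=
  (μ.map X).prod (Measure.pi fun _ : Fin N => μ.map C)

theorem test : True := trivial

/-- The `N`-sample contrastive loss
`L_N(s) := (1/N) Σ_i E_{P_i}[ −log( e^{s(X,C_i)} / Σ_j e^{s(X,C_j)} ) ]`. -/
noncomputable def contrastiveLoss {Ω 𝓧 : Type*} [MeasurableSpace Ω] [MeasurableSpace 𝓧]
    {M : ℕ} (μ : Measure Ω) (X : Ω → 𝓧) (C : Ω → Fin M) (N : ℕ)
    (s : 𝓧 → Fin M → ℝ) : ℝ :=
  (1 / N) * ∑ i : Fin N, ∫ p, -Real.log (Real.exp (s p.1 (p.2 i)) /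
    ∑ j : Fin N, Real.exp (s p.1 (p.2 j))) ∂(Pmeas μ X C N i)

namespace SCaux


variable {M N : ℕ}

lemma sum_pi_prod (f : Fin N → Fin M → ℝ) :
    ∑ cs : Fin N → Fin M, ∏ j, f j (cs j) = ∏ j, ∑ c, f j c := by
  rw [Finset.prod_univ_sum (fun _ => Finset.univ) f, Fintype.piFinset_univ]

lemma prod_ite_one (F : Fin N → ℝ) (i : Fin N) :
    (∏ j, if j = i then F j else 1) = F i := by
  rw [Finset.prod_ite_eq' Finset.univ i F]
  simp

lemma sum_w_gh' (pr : Fin M → ℝ) (hs : ∑ c, pr c = 1) (i j : Fin N)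
    (g h : Fin M → ℝ) :
    ∑ cs : Fin N → Fin M, (∏ k, pr (cs k)) * (g (cs i) * h (cs j))
      = if i = j then ∑ c, pr c * (g c * h c)
        else (∑ c, pr c * g c) * (∑ c, pr c * h c) := by
  have key : ∀ cs : Fin N → Fin M, (∏ k, pr (cs k)) * (g (cs i) * h (cs j))
      = ∏ k, (pr (cs k) * ((if k = i then g (cs k) else 1) * (if k = j then h (cs k) else 1))) := by
    intro cs
    rw [Finset.prod_mul_distrib, Finset.prod_mul_distrib, prod_ite_one (fun k => g (cs k)) i,
      prod_ite_one (fun k => h (cs k)) j]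
  simp_rw [key]
  have := sum_pi_prod (M := M) (N := N)
    (fun k c => pr c * ((if k = i then g c else 1) * (if k = j then h c else 1)))
  rw [this]
  by_cases hij : i = j
  · subst hij
    have hcalc : ∀ k : Fin N, (∑ c, pr c * ((if k = i then g c else 1) * (if k = i then h c else 1)))
        = if k = i then (∑ c, pr c * (g c * h c)) else 1 := by
      intro k
      by_cases hki : k = i
      · simp [hki]
      · simp [hki, hs]
    simp_rw [hcalc]
    rw [prod_ite_one (fun _ => ∑ c, pr c * (g c * h c)) i]
    simp
  · have hcalc : ∀ k : Fin N, (∑ c, pr c * ((if k = i then g c else 1) * (if k = j then h c else 1)))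
        = (if k = i then (∑ c, pr c * g c) else 1) * (if k = j then (∑ c, pr c * h c) else 1) := by
      intro k
      by_cases hki : k = i
      · have hkj : k ≠ j := fun h' => hij (hki ▸ h')
        simp [hki, hkj, hij, Ne.symm hij]
      · by_cases hkj : k = j
        · have hji : ¬ j = i := fun h' => hij h'.symm
          simp [hki, hkj, hji]
        · simp [hki, hkj, hs]
    simp_rw [hcalc]
    rw [Finset.prod_mul_distrib, prod_ite_one (fun _ => ∑ c, pr c * g c) i,
      prod_ite_one (fun _ => ∑ c, pr c * h c) j, if_neg hij]

lemma sum_w_g (pr : Fin M → ℝ) (hs : ∑ c, pr c = 1) (i : Fin N) (g : Fin M → ℝ) :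
    ∑ cs : Fin N → Fin M, (∏ j, pr (cs j)) * g (cs i) = ∑ c, pr c * g c := by
  have := sum_w_gh' pr hs i i g (fun _ => 1)
  simp only [if_pos rfl, mul_one] at this
  exact this

lemma sum_w (pr : Fin M → ℝ) (hs : ∑ c, pr c = 1) :
    ∑ cs : Fin N → Fin M, (∏ j, pr (cs j)) = 1 := by
  rw [sum_pi_prod (fun _ c => pr c)]
  simp [hs]




lemma decomp (pr ρ : Fin M → ℝ) (hs : ∑ c, pr c = 1) (hρ1 : ∑ c, pr c * ρ c = 1)
    (hρpos : ∀ c, 0 < ρ c) (i : Fin N) :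
    Real.log N - ∑ cs : Fin N → Fin M, (∏ j, pr (cs j)) *
        (ρ (cs i) * (Real.log (∑ j, ρ (cs j)) - Real.log (ρ (cs i))))
    = (∑ c, pr c * (ρ c * Real.log (ρ c)))
      - ∑ cs : Fin N → Fin M, (∏ j, pr (cs j)) *
          (ρ (cs i) * Real.log ((∑ j, ρ (cs j)) / N)) := by
  have hN : 0 < N := i.pos
  have hn : (0:ℝ) < N := by exact_mod_cast hN
  have hSpos : ∀ cs : Fin N → Fin M, 0 < ∑ j, ρ (cs j) :=
    fun cs => Finset.sum_pos (fun j _ => hρpos (cs j)) ⟨i, Finset.mem_univ i⟩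
  have e2 : ∀ cs : Fin N → Fin M, (∏ j, pr (cs j)) * (ρ (cs i) * Real.log ((∑ j, ρ (cs j)) / N))
      = (∏ j, pr (cs j)) * (ρ (cs i) * Real.log (∑ j, ρ (cs j)))
        - ((∏ j, pr (cs j)) * ρ (cs i)) * Real.log N := by
    intro cs
    rw [Real.log_div (ne_of_gt (hSpos cs)) (ne_of_gt hn)]
    ring
  have e1 : ∀ cs : Fin N → Fin M, (∏ j, pr (cs j)) *
        (ρ (cs i) * (Real.log (∑ j, ρ (cs j)) - Real.log (ρ (cs i))))
      = (∏ j, pr (cs j)) * (ρ (cs i) * Real.log (∑ j, ρ (cs j)))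
        - (∏ j, pr (cs j)) * (ρ (cs i) * Real.log (ρ (cs i))) := by
    intro cs; ring
  simp_rw [e1, e2, Finset.sum_sub_distrib, ← Finset.sum_mul]
  have h1 : ∑ cs : Fin N → Fin M, (∏ j, pr (cs j)) * (ρ (cs i) * Real.log (ρ (cs i)))
      = ∑ c, pr c * (ρ c * Real.log (ρ c)) :=
    sum_w_g pr hs i (fun c => ρ c * Real.log (ρ c))
  have h2 : ∑ cs : Fin N → Fin M, (∏ j, pr (cs j)) * ρ (cs i) = 1 := by
    rw [sum_w_g pr hs i ρ]; exact hρ1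
  rw [h1, h2]; ring

lemma log_lb {a ε : ℝ} (hε : 0 < ε) (ha : ε ≤ a) :
    (a - 1) - (a - 1)^2 / ε ≤ Real.log a := by
  have hapos : 0 < a := lt_of_lt_of_le hε ha
  have h2 : 1 - a⁻¹ ≤ Real.log a := Real.one_sub_inv_le_log_of_pos hapos
  have h3 : (a - 1) - (a - 1)^2 / a = 1 - a⁻¹ := by
    field_simp
    ring
  have h4 : (a - 1)^2 / a ≤ (a - 1)^2 / ε :=
    div_le_div_of_nonneg_left (sq_nonneg _) hε ha
  linarith

lemma key_bound (pr ρ : Fin M → ℝ) (hpr : ∀ c, 0 ≤ pr c) (hs : ∑ c, pr c = 1)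
    (hρ1 : ∑ c, pr c * ρ c = 1) {ε R : ℝ} (hε : 0 < ε) (hρl : ∀ c, ε ≤ ρ c)
    (hρu : ∀ c, ρ c ≤ R) (i : Fin N) :
    |∑ cs : Fin N → Fin M, (∏ j, pr (cs j)) * (ρ (cs i) * Real.log ((∑ j, ρ (cs j)) / N))|
      ≤ (R*(R+1) + (R/ε)*(R+1)^2) / N := by
  classical
  have hN : 0 < N := i.pos
  have hn : (0:ℝ) < N := by exact_mod_cast hN
  set W : (Fin N → Fin M) → ℝ := fun cs => ∏ j, pr (cs j) with hW
  have hWpos : ∀ cs, 0 ≤ W cs := fun cs => Finset.prod_nonneg (fun j _ => hpr (cs j))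
  set avg : (Fin N → Fin M) → ℝ := fun cs => (∑ j, ρ (cs j)) / N with havg
  have havgl : ∀ cs, ε ≤ avg cs := by
    intro cs
    rw [havg, le_div_iff₀ hn]
    calc ε * N = ∑ _j : Fin N, ε := by rw [Finset.sum_const]; simp [mul_comm]
    _ ≤ ∑ j, ρ (cs j) := Finset.sum_le_sum (fun j _ => hρl (cs j))
  have havgpos : ∀ cs, 0 < avg cs := fun cs => lt_of_lt_of_le hε (havgl cs)
  have hρ0 : ∀ c, 0 ≤ ρ c := fun c => le_of_lt (lt_of_lt_of_le hε (hρl c))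
  have hR0 : 0 < R := by
    have hM : 0 < M := by
      rcases Nat.eq_zero_or_pos M with h | h
      · exfalso; subst h; simp at hρ1
      · exact h
    obtain ⟨c⟩ : Nonempty (Fin M) := ⟨⟨0, hM⟩⟩
    exact lt_of_lt_of_le (lt_of_lt_of_le hε (hρl c)) (hρu c)
  -- pointwise bounds
  have hup : ∀ cs, ρ (cs i) * Real.log (avg cs) ≤ ρ (cs i) * (avg cs - 1) := by
    intro cs
    exact mul_le_mul_of_nonneg_left (Real.log_le_sub_one_of_pos (havgpos cs)) (hρ0 _)
  have hlo : ∀ cs, ρ (cs i) * (avg cs - 1) - (R/ε) * (avg cs - 1)^2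
      ≤ ρ (cs i) * Real.log (avg cs) := by
    intro cs
    have h1 : (avg cs - 1) - (avg cs - 1)^2 / ε ≤ Real.log (avg cs) :=
      log_lb hε (havgl cs)
    have h5 : ρ (cs i) * ((avg cs - 1) - (avg cs - 1)^2 / ε) ≤ ρ (cs i) * Real.log (avg cs) :=
      mul_le_mul_of_nonneg_left h1 (hρ0 _)
    have h6 : ρ (cs i) * ((avg cs - 1)^2 / ε) ≤ R * ((avg cs - 1)^2 / ε) :=
      mul_le_mul_of_nonneg_right (hρu _) (div_nonneg (sq_nonneg _) (le_of_lt hε))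
    have : R * ((avg cs - 1)^2 / ε) = (R/ε) * (avg cs - 1)^2 := by ring
    nlinarith [h5, h6]
  -- the U sum
  have hU : ∑ cs : Fin N → Fin M, W cs * (ρ (cs i) * (avg cs - 1))
      = (∑ c, pr c * (ρ c * (ρ c - 1))) / N := by
    have e : ∀ cs : Fin N → Fin M, W cs * (ρ (cs i) * (avg cs - 1))
        = ∑ j, (W cs * (ρ (cs i) * (ρ (cs j) - 1))) / N := by
      intro cs
      rw [← Finset.sum_div, ← Finset.mul_sum, ← Finset.mul_sum]
      have hNe : (N:ℝ) ≠ 0 := ne_of_gt hn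
      have h1 : avg cs - 1 = (∑ j, (ρ (cs j) - 1)) / N := by
        rw [havg, Finset.sum_sub_distrib, sub_div, Finset.sum_const, Finset.card_univ,
          Fintype.card_fin, nsmul_eq_mul, mul_one, div_self hNe]
      rw [h1]
      ring
    simp_rw [e]
    rw [Finset.sum_comm]
    have inner : ∀ j : Fin N, ∑ cs : Fin N → Fin M, (W cs * (ρ (cs i) * (ρ (cs j) - 1))) / N
        = (if i = j then ∑ c, pr c * (ρ c * (ρ c - 1)) else 0) / N := by
      intro j
      rw [← Finset.sum_div]
      congr 1
      rw [sum_w_gh' pr hs i j ρ (fun c => ρ c - 1)]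
      have hz : ∑ c, pr c * (ρ c - 1) = 0 := by
        simp_rw [mul_sub, Finset.sum_sub_distrib, mul_one, hs, hρ1]
        ring
      by_cases hij : i = j
      · simp [hij]
      · simp [hij, hz]
    simp_rw [inner]
    rw [← Finset.sum_div, Finset.sum_ite_eq Finset.univ i
      (fun _ => ∑ c, pr c * (ρ c * (ρ c - 1)))]
    simp
  -- the V sum
  have hV : ∑ cs : Fin N → Fin M, W cs * (avg cs - 1)^2
      = (∑ c, pr c * ((ρ c - 1) * (ρ c - 1))) / N := by
    have e : ∀ cs : Fin N → Fin M, W cs * (avg cs - 1)^2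
        = ∑ j, ∑ k, (W cs * ((ρ (cs j) - 1) * (ρ (cs k) - 1))) / ((N:ℝ)*N) := by
      intro cs
      have hNe : (N:ℝ) ≠ 0 := ne_of_gt hn
      have h1 : avg cs - 1 = (∑ j, (ρ (cs j) - 1)) / N := by
        rw [havg, Finset.sum_sub_distrib, sub_div, Finset.sum_const, Finset.card_univ,
          Fintype.card_fin, nsmul_eq_mul, mul_one, div_self hNe]
      simp_rw [← Finset.sum_div, ← Finset.mul_sum, ← Finset.sum_mul]
      rw [h1]
      field_simp
    simp_rw [e]
    rw [Finset.sum_comm]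
    have inner : ∀ j : Fin N, ∑ cs : Fin N → Fin M, ∑ k : Fin N,
          (W cs * ((ρ (cs j) - 1) * (ρ (cs k) - 1))) / (N*N)
        = (∑ c, pr c * ((ρ c - 1) * (ρ c - 1))) / (N*N) := by
      intro j
      rw [Finset.sum_comm]
      have inner2 : ∀ k : Fin N, ∑ cs : Fin N → Fin M,
            (W cs * ((ρ (cs j) - 1) * (ρ (cs k) - 1))) / (N*N)
          = (if j = k then ∑ c, pr c * ((ρ c - 1) * (ρ c - 1)) else 0) / (N*N) := by
        intro k
        rw [← Finset.sum_div]
        congr 1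
        rw [sum_w_gh' pr hs j k (fun c => ρ c - 1) (fun c => ρ c - 1)]
        have hz : ∑ c, pr c * (ρ c - 1) = 0 := by
          simp_rw [mul_sub, Finset.sum_sub_distrib, mul_one, hs, hρ1]
          ring
        by_cases hjk : j = k
        · simp [hjk]
        · simp [hjk, hz]
      simp_rw [inner2]
      rw [← Finset.sum_div, Finset.sum_ite_eq Finset.univ j
        (fun _ => ∑ c, pr c * ((ρ c - 1) * (ρ c - 1)))]
      simp
    simp_rw [inner]
    rw [Finset.sum_const]
    simp
    field_simp
  -- bounds on the moments
  have hm1 : |∑ c, pr c * (ρ c * (ρ c - 1))| ≤ R * (R + 1) := by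
    calc |∑ c, pr c * (ρ c * (ρ c - 1))| ≤ ∑ c, |pr c * (ρ c * (ρ c - 1))| :=
          Finset.abs_sum_le_sum_abs _ _
    _ ≤ ∑ c, pr c * (R * (R+1)) := by
        apply Finset.sum_le_sum
        intro c _
        rw [abs_mul, abs_of_nonneg (hpr c)]
        apply mul_le_mul_of_nonneg_left _ (hpr c)
        rw [abs_mul]
        apply mul_le_mul
        · rw [abs_of_nonneg (hρ0 c)]; exact hρu c
        · calc |ρ c - 1| ≤ |ρ c| + 1 := by
                calc |ρ c - 1| ≤ |ρ c| + |(1:ℝ)| := abs_sub _ _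
                _ = |ρ c| + 1 := by rw [abs_one]
          _ ≤ R + 1 := by rw [abs_of_nonneg (hρ0 c)]; linarith [hρu c]
        · exact abs_nonneg _
        · linarith
    _ = R * (R+1) := by rw [← Finset.sum_mul, hs, one_mul]
  have hm2 : ∑ c, pr c * ((ρ c - 1) * (ρ c - 1)) ≤ (R+1)^2 := by
    calc ∑ c, pr c * ((ρ c - 1) * (ρ c - 1)) ≤ ∑ c, pr c * (R+1)^2 := by
          apply Finset.sum_le_sum
          intro c _
          apply mul_le_mul_of_nonneg_left _ (hpr c)
          have h1 : |ρ c - 1| ≤ R + 1 := by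
            calc |ρ c - 1| ≤ |ρ c| + |(1:ℝ)| := abs_sub _ _
            _ ≤ R + 1 := by rw [abs_one, abs_of_nonneg (hρ0 c)]; linarith [hρu c]
          calc (ρ c - 1) * (ρ c - 1) = |ρ c - 1|^2 := by rw [sq_abs]; ring
          _ ≤ (R+1)^2 := by
              apply sq_le_sq'
              · linarith [abs_nonneg (ρ c - 1), neg_abs_le (ρ c - 1)]
              · linarith [le_abs_self (ρ c - 1)]
    _ = (R+1)^2 := by rw [← Finset.sum_mul, hs, one_mul]
  have hm2' : 0 ≤ ∑ c, pr c * ((ρ c - 1) * (ρ c - 1)) :=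
    Finset.sum_nonneg (fun c _ => mul_nonneg (hpr c) (mul_self_nonneg _))
  -- combine
  set T := ∑ cs : Fin N → Fin M, W cs * (ρ (cs i) * Real.log (avg cs)) with hT
  have hTU : T ≤ ∑ cs : Fin N → Fin M, W cs * (ρ (cs i) * (avg cs - 1)) :=
    Finset.sum_le_sum (fun cs _ => mul_le_mul_of_nonneg_left (hup cs) (hWpos cs))
  have hTL : ∑ cs : Fin N → Fin M, (W cs * (ρ (cs i) * (avg cs - 1))
        - W cs * ((R/ε) * (avg cs - 1)^2)) ≤ T := by
    apply Finset.sum_le_sum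
    intro cs _
    have := hlo cs
    have h7 : W cs * (ρ (cs i) * (avg cs - 1) - (R/ε) * (avg cs - 1)^2)
        ≤ W cs * (ρ (cs i) * Real.log (avg cs)) := mul_le_mul_of_nonneg_left this (hWpos cs)
    nlinarith [h7]
  rw [Finset.sum_sub_distrib] at hTL
  have hVsum : ∑ cs : Fin N → Fin M, W cs * ((R/ε) * (avg cs - 1)^2)
      = (R/ε) * ((∑ c, pr c * ((ρ c - 1) * (ρ c - 1))) / N) := by
    rw [← hV, Finset.mul_sum]
    congr 1; funext cs; ring
  have hRε : 0 ≤ R/ε := div_nonneg (le_of_lt hR0) (le_of_lt hε)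
  have habs : |T| ≤ |(∑ c, pr c * (ρ c * (ρ c - 1))) / N|
      + (R/ε) * ((∑ c, pr c * ((ρ c - 1) * (ρ c - 1))) / N) := by
    rw [abs_le]
    constructor
    · have := hTL
      rw [hU, hVsum] at this
      have h8 : -(|(∑ c, pr c * (ρ c * (ρ c - 1))) / N|) ≤ (∑ c, pr c * (ρ c * (ρ c - 1))) / N :=
        neg_abs_le _
      linarith
    · have := hTU
      rw [hU] at this
      have h8 : (∑ c, pr c * (ρ c * (ρ c - 1))) / N ≤ |(∑ c, pr c * (ρ c * (ρ c - 1))) / N| :=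
        le_abs_self _
      have h9 : 0 ≤ (R/ε) * ((∑ c, pr c * ((ρ c - 1) * (ρ c - 1))) / N) :=
        mul_nonneg hRε (div_nonneg hm2' (le_of_lt hn))
      linarith
  have hfinal : |(∑ c, pr c * (ρ c * (ρ c - 1))) / N|
      + (R/ε) * ((∑ c, pr c * ((ρ c - 1) * (ρ c - 1))) / N)
      ≤ (R*(R+1) + (R/ε)*(R+1)^2) / N := by
    rw [abs_div, abs_of_pos hn, add_div]
    apply add_le_add
    · exact (div_le_div_iff_of_pos_right hn).mpr hm1
    · rw [mul_div_assoc]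
      apply mul_le_mul_of_nonneg_left _ hRε
      exact (div_le_div_iff_of_pos_right hn).mpr hm2
  calc |∑ cs : Fin N → Fin M, (∏ j, pr (cs j)) * (ρ (cs i) * Real.log ((∑ j, ρ (cs j)) / N))|
      = |T| := rfl
  _ ≤ _ := le_trans habs hfinal




variable {Ω 𝓧 : Type*} [MeasurableSpace Ω] [MeasurableSpace 𝓧] {M : ℕ}
variable (μ : Measure Ω) [IsProbabilityMeasure μ] {X : Ω → 𝓧} {C : Ω → Fin M}

lemma abs_log_le {a b t : ℝ} (ha : 0 < a) (hat : a ≤ t) (htb : t ≤ b) :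
    |Real.log t| ≤ |Real.log a| + |Real.log b| := by
  have h1 : Real.log a ≤ Real.log t := Real.log_le_log ha hat
  have h2 : Real.log t ≤ Real.log b := Real.log_le_log (lt_of_lt_of_le ha hat) htb
  rw [abs_le]
  constructor
  · have := neg_abs_le (Real.log a); linarith [abs_nonneg (Real.log b)]
  · have := le_abs_self (Real.log b); linarith [abs_nonneg (Real.log a)]

lemma fiber_sum (hC : Measurable C) {S : Set Ω} (hS : MeasurableSet S) :
    ∑ c, μ (S ∩ C ⁻¹' {c}) = μ S := by
  have hcover : S = ⋃ c ∈ Finset.univ, S ∩ C ⁻¹' {c} := by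
    ext ω
    simp only [Set.mem_iUnion, Set.mem_inter_iff, Set.mem_preimage, Set.mem_singleton_iff]
    constructor
    · intro h; exact ⟨C ω, Finset.mem_univ _, h, rfl⟩
    · rintro ⟨c, _, h, _⟩; exact h
  rw [show μ S = μ (⋃ c ∈ Finset.univ, S ∩ C ⁻¹' {c}) from by rw [← hcover]]
  rw [measure_biUnion_finset]
  · intro c _ c' _ hcc'
    apply Set.disjoint_left.2
    rintro ω ⟨_, h1⟩ ⟨_, h2⟩
    simp only [Set.mem_preimage, Set.mem_singleton_iff] at h1 h2
    exact hcc' (h1 ▸ h2 ▸ rfl)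
  · exact fun c _ => hS.inter (hC (measurableSet_singleton c))

lemma fiber_sum_toReal (hC : Measurable C) {S : Set Ω} (hS : MeasurableSet S) :
    ∑ c, (μ (S ∩ C ⁻¹' {c})).toReal = (μ S).toReal := by
  rw [← ENNReal.toReal_sum (fun c _ => measure_ne_top μ _), fiber_sum μ hC hS]

lemma condLaw_eq (hX : Measurable X) (hC : Measurable C) (c : Fin M)
    (hc : μ (C ⁻¹' {c}) ≠ 0) {g : 𝓧 → ℝ} (hgm : Measurable g) (hg0 : ∀ x, 0 ≤ g x)
    (hgi : Integrable g (μ.map X))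
    (hgver : ∀ A : Set 𝓧, MeasurableSet A →
      ∫ x in A, g x ∂(μ.map X) = (μ (X ⁻¹' A ∩ C ⁻¹' {c})).toReal) :
    condLaw μ X C c
      = (μ.map X).withDensity (fun x => ENNReal.ofReal (g x / (μ (C ⁻¹' {c})).toReal)) := by
  have hprc : 0 < (μ (C ⁻¹' {c})).toReal :=
    ENNReal.toReal_pos hc (measure_ne_top μ _)
  ext A hA
  rw [condLaw, Measure.map_apply hX hA, cond_apply (hC (measurableSet_singleton c)) μ,
    withDensity_apply _ hA]
  have h1 : ∫⁻ x in A, ENNReal.ofReal (g x / (μ (C ⁻¹' {c})).toReal) ∂(μ.map X)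
      = ENNReal.ofReal (∫ x in A, g x / (μ (C ⁻¹' {c})).toReal ∂(μ.map X)) := by
    rw [ofReal_integral_eq_lintegral_ofReal]
    · exact (hgi.restrict).div_const _
    · exact Filter.Eventually.of_forall (fun x => div_nonneg (hg0 x) (le_of_lt hprc))
  rw [h1, integral_div, hgver A hA]
  rw [ENNReal.ofReal_div_of_pos hprc, ENNReal.ofReal_toReal (measure_ne_top μ _),
    ENNReal.ofReal_toReal (measure_ne_top μ _)]
  rw [Set.inter_comm, div_eq_mul_inv, mul_comm]

lemma Pmeas_eq (N : ℕ) (i : Fin N) :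
    Pmeas μ X C N i = ∑ cs : Fin N → Fin M,
      ((Measure.pi fun _ : Fin N => μ.map C) {cs}) •
        ((condLaw μ X C (cs i)).map (fun x => (x, cs))) := by
  ext s hs
  rw [Pmeas, Measure.bind_apply hs (measurable_of_countable _).aemeasurable, lintegral_fintype,
    Measure.finset_sum_apply]
  simp_rw [Measure.smul_apply, smul_eq_mul, mul_comm]

lemma pi_singleton (hC : Measurable C) (N : ℕ) (cs : Fin N → Fin M) :
    (Measure.pi fun _ : Fin N => μ.map C) {cs} = ∏ j, μ (C ⁻¹' {cs j}) := by
  haveI : IsProbabilityMeasure (μ.map C) := Measure.isProbabilityMeasure_map hC.aemeasurable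
  rw [← Set.univ_pi_singleton, Measure.pi_pi]
  simp_rw [Measure.map_apply hC (measurableSet_singleton _)]

-- a.e. upper bound 1 for a conditional probability version
lemma pc_le_one (hX : Measurable X) (hC : Measurable C) (c : Fin M) {g : 𝓧 → ℝ}
    (hgm : Measurable g)
    (hgver : ∀ A : Set 𝓧, MeasurableSet A →
      ∫ x in A, g x ∂(μ.map X) = (μ (X ⁻¹' A ∩ C ⁻¹' {c})).toReal) :
    ∀ᵐ x ∂(μ.map X), g x ≤ 1 := by
  haveI : IsProbabilityMeasure (μ.map X) := Measure.isProbabilityMeasure_map hX.aemeasurable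
  set ν := μ.map X with hν
  have hB : ∀ n K : ℕ, ν {x | 1 + 1/(n+1 : ℝ) ≤ g x ∧ g x ≤ K} = 0 := by
    intro n K
    set B := {x | 1 + 1/(n+1 : ℝ) ≤ g x ∧ g x ≤ K} with hBdef
    have hBm : MeasurableSet B :=
      (measurableSet_le measurable_const hgm).inter (measurableSet_le hgm measurable_const)
    have hint : IntegrableOn g B ν := by
      apply Integrable.mono' (integrable_const (K : ℝ))
      · exact hgm.aestronglyMeasurable.restrict
      · refine (ae_restrict_iff' hBm).2 (Filter.Eventually.of_forall ?_)
        intro x hx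
        have h1 : (0:ℝ) < 1 + 1/(n+1 : ℝ) := by positivity
        rw [Real.norm_eq_abs, abs_of_nonneg (le_trans (le_of_lt h1) hx.1)]
        exact hx.2
    have hlow : (1 + 1/(n+1 : ℝ)) * (ν B).toReal ≤ ∫ x in B, g x ∂ν := by
      have hconst : ∫ _x in B, (1 + 1/(n+1:ℝ)) ∂ν = (1 + 1/(n+1:ℝ)) * (ν B).toReal := by
        rw [setIntegral_const, smul_eq_mul, mul_comm]; rfl
      rw [← hconst]
      apply setIntegral_mono_on (integrableOn_const (measure_ne_top ν B)) hint hBm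
      exact fun x hx => hx.1
    have hup : ∫ x in B, g x ∂ν ≤ (ν B).toReal := by
      rw [hgver B hBm]
      have : μ (X ⁻¹' B ∩ C ⁻¹' {c}) ≤ μ (X ⁻¹' B) := measure_mono Set.inter_subset_left
      have h2 : (μ (X ⁻¹' B ∩ C ⁻¹' {c})).toReal ≤ (μ (X ⁻¹' B)).toReal :=
        ENNReal.toReal_mono (measure_ne_top μ _) this
      rwa [← Measure.map_apply hX hBm] at h2
    have hν0 : (ν B).toReal = 0 := by
      by_contra h
      have hpos : 0 < (ν B).toReal :=
        lt_of_le_of_ne (ENNReal.toReal_nonneg) (Ne.symm h)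
      nlinarith [hlow, hup, div_pos one_pos (show (0:ℝ) < n+1 by positivity)]
    exact (ENNReal.toReal_eq_zero_iff _).1 hν0 |>.resolve_right (measure_ne_top ν B)
  rw [ae_iff]
  have hsub : {x | ¬ g x ≤ 1} ⊆ ⋃ n : ℕ, ⋃ K : ℕ, {x | 1 + 1/(n+1 : ℝ) ≤ g x ∧ g x ≤ K} := by
    intro x hx
    simp only [Set.mem_setOf_eq, not_le] at hx
    obtain ⟨n, hn⟩ := exists_nat_gt (1 / (g x - 1))
    obtain ⟨K, hK⟩ := exists_nat_ge (g x)
    simp only [Set.mem_iUnion]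
    refine ⟨n, K, ?_, hK⟩
    have hgx : 0 < g x - 1 := by linarith
    have hn' : 1 / (g x - 1) < n + 1 := lt_trans hn (by linarith)
    have := (div_lt_iff₀ hgx).1 hn'
    have h2 : 1/(n+1:ℝ) ≤ g x - 1 := by
      rw [div_le_iff₀ (show (0:ℝ) < n+1 by positivity)]
      linarith
    linarith
  apply measure_mono_null hsub
  apply measure_iUnion_null
  intro n
  apply measure_iUnion_null
  intro K
  exact hB n K


lemma sum_pc_eq_one (hX : Measurable X) (hC : Measurable C) (pc : Fin M → 𝓧 → ℝ)
    (hpcmeas : ∀ c, Measurable (pc c))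
    (hpcver : ∀ c, ∀ A : Set 𝓧, MeasurableSet A →
      ∫ x in A, pc c x ∂(μ.map X) = (μ (X ⁻¹' A ∩ C ⁻¹' {c})).toReal)
    (h0 : ∀ c, ∀ᵐ x ∂(μ.map X), 0 ≤ pc c x)
    (h1 : ∀ c, ∀ᵐ x ∂(μ.map X), pc c x ≤ 1) :
    ∀ᵐ x ∂(μ.map X), ∑ c, pc c x = 1 := by
  haveI : IsProbabilityMeasure (μ.map X) := Measure.isProbabilityMeasure_map hX.aemeasurable
  set ν := μ.map X with hν
  set Gd : Set 𝓧 := {x | ∀ c, 0 ≤ pc c x ∧ pc c x ≤ 1} with hGddef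
  have hGdm : MeasurableSet Gd := by
    have : Gd = ⋂ c, ({x | 0 ≤ pc c x} ∩ {x | pc c x ≤ 1}) := by
      ext x; simp [hGddef, forall_and]
    rw [this]
    exact MeasurableSet.iInter (fun c =>
      (measurableSet_le measurable_const (hpcmeas c)).inter
        (measurableSet_le (hpcmeas c) measurable_const))
  have hGdc : ν Gdᶜ = 0 := by
    have hsub : Gdᶜ ⊆ ⋃ c, ({x | ¬ (0 ≤ pc c x)} ∪ {x | ¬ (pc c x ≤ 1)}) := by
      intro x hx
      simp only [hGddef, Set.mem_compl_iff, Set.mem_setOf_eq, not_forall] at hx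
      obtain ⟨c, hc⟩ := hx
      simp only [Set.mem_iUnion, Set.mem_union, Set.mem_setOf_eq]
      by_cases h : 0 ≤ pc c x
      · exact ⟨c, Or.inr (fun h' => hc ⟨h, h'⟩)⟩
      · exact ⟨c, Or.inl h⟩
    apply measure_mono_null hsub
    apply measure_iUnion_null
    intro c
    apply measure_union_null
    · exact ae_iff.1 (h0 c)
    · exact ae_iff.1 (h1 c)
  set u : 𝓧 → ℝ := fun x => ∑ c, pc c x with hu
  have hum : Measurable u := Finset.measurable_sum _ (fun c _ => hpcmeas c)
  -- key integral identity on measurable subsets of Gd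
  have key : ∀ A : Set 𝓧, MeasurableSet A → A ⊆ Gd → ∫ x in A, u x ∂ν = (ν A).toReal := by
    intro A hA hAGd
    have hint : ∀ c : Fin M, IntegrableOn (pc c) A ν := by
      intro c
      apply Integrable.mono' (integrable_const (1:ℝ))
      · exact (hpcmeas c).aestronglyMeasurable.restrict
      · refine (ae_restrict_iff' hA).2 (Filter.Eventually.of_forall ?_)
        intro x hx
        have := hAGd hx
        rw [Real.norm_eq_abs, abs_of_nonneg (this c).1]
        exact (this c).2
    have h2 : ∫ x in A, u x ∂ν = ∑ c, ∫ x in A, pc c x ∂ν := by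
      rw [hu]
      exact integral_finset_sum _ (fun c _ => hint c)
    rw [h2]
    have h3 : ∀ c : Fin M, ∫ x in A, pc c x ∂ν = (μ (X ⁻¹' A ∩ C ⁻¹' {c})).toReal :=
      fun c => hpcver c A hA
    simp_rw [h3]
    rw [fiber_sum_toReal μ hC (hX hA), ← Measure.map_apply hX hA]
  have hstrat : ∀ n : ℕ,
      ν (Gd ∩ {x | u x ≤ 1 - 1/(n+1 : ℝ)}) = 0 ∧ ν (Gd ∩ {x | 1 + 1/(n+1 : ℝ) ≤ u x}) = 0 := by
    intro n
    have hδ : (0:ℝ) < 1/(n+1 : ℝ) := by positivity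
    constructor
    · set A := Gd ∩ {x | u x ≤ 1 - 1/(n+1 : ℝ)} with hA
      have hAm : MeasurableSet A := hGdm.inter (measurableSet_le hum measurable_const)
      have hkey := key A hAm Set.inter_subset_left
      have hup : ∫ x in A, u x ∂ν ≤ (1 - 1/(n+1 : ℝ)) * (ν A).toReal := by
        have hconst : ∫ _x in A, (1 - 1/(n+1:ℝ)) ∂ν = (1 - 1/(n+1:ℝ)) * (ν A).toReal := by
          rw [setIntegral_const, smul_eq_mul, mul_comm]; rfl
        rw [← hconst]
        apply setIntegral_mono_on _ (integrableOn_const (measure_ne_top ν A)) hAm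
        · exact fun x hx => hx.2
        · apply Integrable.mono' (integrable_const (M:ℝ))
          · exact hum.aestronglyMeasurable.restrict
          · refine (ae_restrict_iff' hAm).2 (Filter.Eventually.of_forall ?_)
            intro x hx
            have hxGd := hx.1
            rw [Real.norm_eq_abs, hu]
            calc |∑ c, pc c x| ≤ ∑ c, |pc c x| := Finset.abs_sum_le_sum_abs _ _
            _ ≤ ∑ _c : Fin M, (1:ℝ) := Finset.sum_le_sum (fun c _ => by
                rw [abs_of_nonneg (hxGd c).1]; exact (hxGd c).2)
            _ = (M:ℝ) := by simp
      have : (ν A).toReal = 0 := by nlinarith [ENNReal.toReal_nonneg (a := ν A)]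
      exact (ENNReal.toReal_eq_zero_iff _).1 this |>.resolve_right (measure_ne_top ν A)
    · set A := Gd ∩ {x | 1 + 1/(n+1 : ℝ) ≤ u x} with hA
      have hAm : MeasurableSet A := hGdm.inter (measurableSet_le measurable_const hum)
      have hkey := key A hAm Set.inter_subset_left
      have hlow : (1 + 1/(n+1 : ℝ)) * (ν A).toReal ≤ ∫ x in A, u x ∂ν := by
        have hconst : ∫ _x in A, (1 + 1/(n+1:ℝ)) ∂ν = (1 + 1/(n+1:ℝ)) * (ν A).toReal := by
          rw [setIntegral_const, smul_eq_mul, mul_comm]; rfl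
        rw [← hconst]
        apply setIntegral_mono_on (integrableOn_const (measure_ne_top ν A)) _ hAm
        · exact fun x hx => hx.2
        · apply Integrable.mono' (integrable_const (M:ℝ))
          · exact hum.aestronglyMeasurable.restrict
          · refine (ae_restrict_iff' hAm).2 (Filter.Eventually.of_forall ?_)
            intro x hx
            have hxGd := hx.1
            rw [Real.norm_eq_abs, hu]
            calc |∑ c, pc c x| ≤ ∑ c, |pc c x| := Finset.abs_sum_le_sum_abs _ _
            _ ≤ ∑ _c : Fin M, (1:ℝ) := Finset.sum_le_sum (fun c _ => by
                rw [abs_of_nonneg (hxGd c).1]; exact (hxGd c).2)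
            _ = (M:ℝ) := by simp
      have : (ν A).toReal = 0 := by nlinarith [ENNReal.toReal_nonneg (a := ν A)]
      exact (ENNReal.toReal_eq_zero_iff _).1 this |>.resolve_right (measure_ne_top ν A)
  rw [ae_iff]
  have hsub : {x | ¬ u x = 1} ⊆ Gdᶜ ∪ ⋃ n : ℕ,
      (Gd ∩ {x | u x ≤ 1 - 1/(n+1 : ℝ)}) ∪ (Gd ∩ {x | 1 + 1/(n+1 : ℝ) ≤ u x}) := by
    intro x hx
    simp only [Set.mem_setOf_eq] at hx
    by_cases hxGd : x ∈ Gd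
    · right
      rcases lt_or_gt_of_ne hx with h | h
      · obtain ⟨n, hn⟩ := exists_nat_gt (1 / (1 - u x))
        have hpos : 0 < 1 - u x := by linarith
        have hn' : 1 / (1 - u x) < n + 1 := lt_trans hn (by linarith)
        have h2 : 1/(n+1:ℝ) ≤ 1 - u x := by
          rw [div_le_iff₀ (show (0:ℝ) < n+1 by positivity)]
          have := (div_lt_iff₀ hpos).1 hn'
          linarith
        simp only [Set.mem_iUnion, Set.mem_union]
        exact ⟨n, Or.inl ⟨hxGd, by simp only [Set.mem_setOf_eq]; linarith⟩⟩
      · obtain ⟨n, hn⟩ := exists_nat_gt (1 / (u x - 1))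
        have hpos : 0 < u x - 1 := by linarith
        have hn' : 1 / (u x - 1) < n + 1 := lt_trans hn (by linarith)
        have h2 : 1/(n+1:ℝ) ≤ u x - 1 := by
          rw [div_le_iff₀ (show (0:ℝ) < n+1 by positivity)]
          have := (div_lt_iff₀ hpos).1 hn'
          linarith
        simp only [Set.mem_iUnion, Set.mem_union]
        exact ⟨n, Or.inr ⟨hxGd, by simp only [Set.mem_setOf_eq]; linarith⟩⟩
    · exact Or.inl hxGd
  apply measure_mono_null hsub
  apply measure_union_null hGdc
  apply measure_iUnion_null
  intro n
  exact measure_union_null (hstrat n).1 (hstrat n).2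


lemma loss_integral (hX : Measurable X) (hC : Measurable C)
    (hc0 : ∀ c, μ (C ⁻¹' {c}) ≠ 0)
    (pr : Fin M → ℝ) (hpreq : ∀ c, pr c = (μ (C ⁻¹' {c})).toReal)
    (pc : Fin M → 𝓧 → ℝ)
    (q : Fin M → 𝓧 → ℝ) (hqmeas : ∀ c, Measurable (q c))
    (hqae : ∀ᵐ x ∂(μ.map X), ∀ c, pc c x = q c x)
    {εq Rq : ℝ} (hεq : 0 < εq)
    (hrl : ∀ x c, εq ≤ q c x / pr c) (hru : ∀ x c, q c x / pr c ≤ Rq)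
    (hκ : ∀ c, condLaw μ X C c
        = (μ.map X).withDensity (fun x => ENNReal.ofReal (q c x / pr c)))
    (N : ℕ) (i : Fin N)
    (hℓm : Measurable (fun p : 𝓧 × (Fin N → Fin M) =>
      -Real.log (Real.exp (Real.log (pc (p.2 i) p.1 / pr (p.2 i))) /
        ∑ j, Real.exp (Real.log (pc (p.2 j) p.1 / pr (p.2 j)))))) :
    ∫ p, -Real.log (Real.exp (Real.log (pc (p.2 i) p.1 / pr (p.2 i))) /
        ∑ j, Real.exp (Real.log (pc (p.2 j) p.1 / pr (p.2 j)))) ∂(Pmeas μ X C N i)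
    = ∑ cs : Fin N → Fin M, (∏ j, pr (cs j)) *
        ∫ x, (q (cs i) x / pr (cs i)) * (Real.log (∑ j, q (cs j) x / pr (cs j))
          - Real.log (q (cs i) x / pr (cs i))) ∂(μ.map X) := by
  haveI : IsProbabilityMeasure (μ.map X) := Measure.isProbabilityMeasure_map hX.aemeasurable
  haveI : IsProbabilityMeasure (μ.map C) := Measure.isProbabilityMeasure_map hC.aemeasurable
  haveI hκprob : ∀ c, IsProbabilityMeasure (condLaw μ X C c) := by
    intro c
    haveI := cond_isProbabilityMeasure (μ := μ) (hc0 c)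
    exact Measure.isProbabilityMeasure_map hX.aemeasurable
  set ν := μ.map X with hν
  set ℓ : 𝓧 × (Fin N → Fin M) → ℝ := fun p =>
    -Real.log (Real.exp (Real.log (pc (p.2 i) p.1 / pr (p.2 i))) /
      ∑ j, Real.exp (Real.log (pc (p.2 j) p.1 / pr (p.2 j)))) with hℓ
  have hN : 0 < N := i.pos
  have hn : (0:ℝ) < N := by exact_mod_cast hN
  -- good-point simplification
  have hgood : ∀ cs : Fin N → Fin M, ∀ x : 𝓧, (∀ c', pc c' x = q c' x) →
      ℓ (x, cs) = Real.log (∑ j, q (cs j) x / pr (cs j))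
        - Real.log (q (cs i) x / pr (cs i)) := by
    intro cs x hx
    have hpos : ∀ c, 0 < q c x / pr c := fun c => lt_of_lt_of_le hεq (hrl x c)
    have hsum : (∑ j, Real.exp (Real.log (pc (cs j) x / pr (cs j))))
        = ∑ j, q (cs j) x / pr (cs j) := by
      refine Finset.sum_congr rfl (fun j _ => ?_)
      rw [hx (cs j), Real.exp_log (hpos _)]
    have hsumpos : 0 < ∑ j, q (cs j) x / pr (cs j) :=
      Finset.sum_pos (fun j _ => hpos _) ⟨i, Finset.mem_univ i⟩
    rw [hℓ]
    simp only
    rw [hsum, hx (cs i), Real.exp_log (hpos _),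
      Real.log_div (ne_of_gt (hpos _)) (ne_of_gt hsumpos)]
    ring
  -- a bound on the good region
  set B : ℝ := (|Real.log (N * εq)| + |Real.log (N * Rq)|)
      + (|Real.log εq| + |Real.log Rq|) with hB
  have hbound : ∀ cs : Fin N → Fin M, ∀ x : 𝓧,
      |Real.log (∑ j, q (cs j) x / pr (cs j)) - Real.log (q (cs i) x / pr (cs i))| ≤ B := by
    intro cs x
    have hpos : ∀ c, 0 < q c x / pr c := fun c => lt_of_lt_of_le hεq (hrl x c)
    have h1 : |Real.log (∑ j, q (cs j) x / pr (cs j))|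
        ≤ |Real.log (N * εq)| + |Real.log (N * Rq)| := by
      apply abs_log_le (by positivity)
      · calc (N:ℝ) * εq = ∑ _j : Fin N, εq := by
              rw [Finset.sum_const]; simp [mul_comm]
        _ ≤ ∑ j, q (cs j) x / pr (cs j) := Finset.sum_le_sum (fun j _ => hrl x (cs j))
      · calc ∑ j, q (cs j) x / pr (cs j) ≤ ∑ _j : Fin N, Rq :=
              Finset.sum_le_sum (fun j _ => hru x (cs j))
        _ = (N:ℝ) * Rq := by rw [Finset.sum_const]; simp [mul_comm]
    have h2 : |Real.log (q (cs i) x / pr (cs i))| ≤ |Real.log εq| + |Real.log Rq| :=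
      abs_log_le hεq (hrl x (cs i)) (hru x (cs i))
    calc |Real.log (∑ j, q (cs j) x / pr (cs j)) - Real.log (q (cs i) x / pr (cs i))|
        ≤ |Real.log (∑ j, q (cs j) x / pr (cs j))| + |Real.log (q (cs i) x / pr (cs i))| :=
          abs_sub _ _
    _ ≤ B := by rw [hB]; exact add_le_add h1 h2
  -- ae statements on condLaw
  have hae_κ : ∀ c, ∀ᵐ x ∂(condLaw μ X C c), ∀ c', pc c' x = q c' x := by
    intro c
    rw [hκ c]
    exact hqae.filter_mono (withDensity_absolutelyContinuous ν _).ae_le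
  -- integrability
  have hemb : ∀ cs : Fin N → Fin M, Measurable (fun x : 𝓧 => (x, cs)) :=
    fun cs => measurable_id.prodMk measurable_const
  have hInt : ∀ cs : Fin N → Fin M, Integrable ℓ ((condLaw μ X C (cs i)).map (fun x => (x, cs))) := by
    intro cs
    rw [integrable_map_measure hℓm.aestronglyMeasurable (hemb cs).aemeasurable]
    apply Integrable.mono' (integrable_const B)
    · exact (hℓm.comp (hemb cs)).aestronglyMeasurable
    · filter_upwards [hae_κ (cs i)] with x hx
      rw [Function.comp_apply, Real.norm_eq_abs, hgood cs x hx]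
      exact hbound cs x
  -- main computation
  rw [Pmeas_eq μ N i]
  rw [integral_finset_sum_measure (fun cs _ => (hInt cs).smul_measure (measure_ne_top _ _))]
  refine Finset.sum_congr rfl (fun cs _ => ?_)
  rw [integral_smul_measure, pi_singleton μ hC N cs]
  have htoReal : (∏ j, μ (C ⁻¹' {cs j})).toReal = ∏ j, pr (cs j) := by
    rw [ENNReal.toReal_prod]
    exact Finset.prod_congr rfl (fun j _ => (hpreq (cs j)).symm)
  rw [htoReal, smul_eq_mul]
  congr 1
  rw [integral_map (hemb cs).aemeasurable hℓm.aestronglyMeasurable]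
  have hcongr : ∫ x, ℓ (x, cs) ∂(condLaw μ X C (cs i))
      = ∫ x, (Real.log (∑ j, q (cs j) x / pr (cs j))
          - Real.log (q (cs i) x / pr (cs i))) ∂(condLaw μ X C (cs i)) := by
    apply integral_congr_ae
    filter_upwards [hae_κ (cs i)] with x hx
    exact hgood cs x hx
  rw [hcongr, hκ (cs i)]
  have hd : (fun x => ENNReal.ofReal (q (cs i) x / pr (cs i)))
      = (fun x => ((fun y => Real.toNNReal (q (cs i) y / pr (cs i))) x : ℝ≥0∞)) := rfl
  rw [hd, integral_withDensity_eq_integral_smul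
    (by exact (measurable_real_toNNReal.comp ((hqmeas (cs i)).div_const _)))]
  refine integral_congr_ae (Filter.Eventually.of_forall (fun x => ?_))
  have h0 : 0 ≤ q (cs i) x / pr (cs i) := le_trans (le_of_lt hεq) (hrl x (cs i))
  simp only [NNReal.smul_def, smul_eq_mul, Real.coe_toNNReal _ h0]


lemma kl_eq (hX : Measurable X) (hC : Measurable C)
    (hc0 : ∀ c, μ (C ⁻¹' {c}) ≠ 0)
    (pr : Fin M → ℝ) (hpreq : ∀ c, pr c = (μ (C ⁻¹' {c})).toReal)
    (q : Fin M → 𝓧 → ℝ) (hqmeas : ∀ c, Measurable (q c))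
    (hqint : ∀ c, Integrable (q c) (μ.map X))
    (hqver : ∀ c, ∀ A : Set 𝓧, MeasurableSet A →
      ∫ x in A, q c x ∂(μ.map X) = (μ (X ⁻¹' A ∩ C ⁻¹' {c})).toReal)
    {εq Rq : ℝ} (hεq : 0 < εq)
    (hrl : ∀ x c, εq ≤ q c x / pr c) (hru : ∀ x c, q c x / pr c ≤ Rq) :
    klDivergence (μ.map (fun ω => (X ω, C ω))) ((μ.map X).prod (μ.map C))
      = ((∫ x, (∑ c, pr c * ((q c x / pr c) * Real.log (q c x / pr c)))
          ∂(μ.map X) : ℝ) : EReal) := by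
  haveI : IsProbabilityMeasure (μ.map X) := Measure.isProbabilityMeasure_map hX.aemeasurable
  haveI : IsProbabilityMeasure (μ.map C) := Measure.isProbabilityMeasure_map hC.aemeasurable
  set ν := μ.map X with hν
  set J := μ.map (fun ω => (X ω, C ω)) with hJ
  set Qm := ν.prod (μ.map C) with hQm
  haveI : IsProbabilityMeasure J := Measure.isProbabilityMeasure_map (hX.prodMk hC).aemeasurable
  have hprpos : ∀ c, 0 < pr c := by
    intro c
    rw [hpreq c]
    exact ENNReal.toReal_pos (hc0 c) (measure_ne_top μ _)
  have hq0 : ∀ c x, 0 ≤ q c x := by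
    intro c x
    have h2 : 0 < q c x / pr c := lt_of_lt_of_le hεq (hrl x c)
    have h3 : q c x / pr c * pr c = q c x := div_mul_cancel₀ _ (ne_of_gt (hprpos c))
    nlinarith [mul_pos h2 (hprpos c)]
  set dens : 𝓧 × Fin M → ℝ≥0∞ := fun p => ENNReal.ofReal (q p.2 p.1 / pr p.2) with hdens
  have hrrm : Measurable (fun p : 𝓧 × Fin M => q p.2 p.1 / pr p.2) :=
    measurable_from_prod_countable_left (fun c =>
      show Measurable (fun x : 𝓧 => q c x / pr c) from (hqmeas c).div_const _)
  have hdm : Measurable dens := ENNReal.measurable_ofReal.comp hrrm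
  -- the density identity
  have hprod : J = Qm.withDensity dens := by
    ext s hs
    rw [hJ, Measure.map_apply (hX.prodMk hC) hs, withDensity_apply _ hs]
    have hsec : ∀ c : Fin M, MeasurableSet {x | (x, c) ∈ s} :=
      fun c => (measurable_id.prodMk measurable_const) hs
    -- RHS
    have hR : ∫⁻ p in s, dens p ∂Qm = ∑ c, μ (X ⁻¹' {x | (x, c) ∈ s} ∩ C ⁻¹' {c}) := by
      rw [← lintegral_indicator hs]
      rw [lintegral_prod _ ((hdm.indicator hs).aemeasurable)]
      have hinner : ∀ x : 𝓧, ∫⁻ c, s.indicator dens (x, c) ∂(μ.map C)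
          = ∑ c, s.indicator dens (x, c) * μ (C ⁻¹' {c}) := by
        intro x
        rw [lintegral_fintype]
        exact Finset.sum_congr rfl (fun c _ => by
          rw [Measure.map_apply hC (measurableSet_singleton c)])
      simp_rw [hinner]
      rw [lintegral_finset_sum]
      swap
      · exact fun c _ => ((hdm.indicator hs).comp (measurable_id.prodMk measurable_const)).mul_const _
      refine Finset.sum_congr rfl (fun c _ => ?_)
      have hindeq : ∀ x : 𝓧, s.indicator dens (x, c)
          = Set.indicator {x | (x, c) ∈ s} (fun x => ENNReal.ofReal (q c x / pr c)) x := by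
        intro x
        by_cases hx : (x, c) ∈ s
        · rw [Set.indicator_of_mem hx,
            Set.indicator_of_mem (show x ∈ {x | (x, c) ∈ s} from hx)]
        · rw [Set.indicator_of_notMem hx,
            Set.indicator_of_notMem (show x ∉ {x | (x, c) ∈ s} from hx)]
      simp_rw [hindeq]
      rw [lintegral_mul_const _ (show Measurable ({x | (x, c) ∈ s}.indicator
        (fun x => ENNReal.ofReal (q c x / pr c))) from
        ((ENNReal.measurable_ofReal.comp ((hqmeas c).div_const _)).indicator (hsec c)))]
      rw [lintegral_indicator (hsec c)]
      have h1 : ∫⁻ x in {x | (x, c) ∈ s}, ENNReal.ofReal (q c x / pr c) ∂ν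
          = ENNReal.ofReal (∫ x in {x | (x, c) ∈ s}, q c x / pr c ∂ν) := by
        rw [ofReal_integral_eq_lintegral_ofReal ((hqint c).restrict.div_const _)
          (Filter.Eventually.of_forall (fun x => div_nonneg (hq0 c x) (le_of_lt (hprpos c))))]
      rw [h1, integral_div, hqver c _ (hsec c)]
      have h2 : μ (C ⁻¹' {c}) = ENNReal.ofReal (pr c) := by
        rw [hpreq c, ENNReal.ofReal_toReal (measure_ne_top μ _)]
      rw [h2, ← ENNReal.ofReal_mul (div_nonneg ENNReal.toReal_nonneg (le_of_lt (hprpos c)))]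
      rw [div_mul_cancel₀ _ (ne_of_gt (hprpos c))]
      rw [ENNReal.ofReal_toReal (measure_ne_top μ _)]
    rw [hR]
    -- LHS
    have hpre : MeasurableSet ((fun ω => (X ω, C ω)) ⁻¹' s) := (hX.prodMk hC) hs
    rw [← fiber_sum μ hC hpre]
    refine Finset.sum_congr rfl (fun c _ => ?_)
    congr 1
    ext ω
    simp only [Set.mem_inter_iff, Set.mem_preimage, Set.mem_singleton_iff, Set.mem_setOf_eq]
    constructor
    · rintro ⟨h1, h2⟩; exact ⟨by rwa [h2] at h1, h2⟩
    · rintro ⟨h1, h2⟩; exact ⟨by rwa [← h2] at h1, h2⟩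
  -- absolute continuity & Radon–Nikodym
  have habs : J ≪ Qm := by rw [hprod]; exact withDensity_absolutelyContinuous _ _
  have hrn : J.rnDeriv Qm =ᵐ[Qm] dens := by
    rw [hprod]
    exact Measure.rnDeriv_withDensity Qm hdm
  have hrnJ : J.rnDeriv Qm =ᵐ[J] dens := habs.ae_eq hrn
  set Blog : ℝ := |Real.log εq| + |Real.log Rq| with hBlog
  have hlogbd : ∀ p : 𝓧 × Fin M, |Real.log (q p.2 p.1 / pr p.2)| ≤ Blog :=
    fun p => abs_log_le hεq (hrl p.1 p.2) (hru p.1 p.2)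
  have hrr0 : ∀ p : 𝓧 × Fin M, 0 < q p.2 p.1 / pr p.2 :=
    fun p => lt_of_lt_of_le hεq (hrl p.1 p.2)
  have hae_log : (fun p => Real.log ((J.rnDeriv Qm p).toReal))
      =ᵐ[J] (fun p => Real.log (q p.2 p.1 / pr p.2)) := by
    filter_upwards [hrnJ] with p hp
    rw [hp, hdens]
    simp only
    rw [ENNReal.toReal_ofReal (le_of_lt (hrr0 p))]
  have hint_log : Integrable (fun p : 𝓧 × Fin M => Real.log (q p.2 p.1 / pr p.2)) J := by
    apply Integrable.mono' (integrable_const Blog)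
    · exact (Real.measurable_log.comp hrrm).aestronglyMeasurable
    · exact Filter.Eventually.of_forall (fun p => hlogbd p)
  have hint_rn : Integrable (fun p => Real.log ((J.rnDeriv Qm p).toReal)) J :=
    hint_log.congr hae_log.symm
  rw [klDivergence, if_pos ⟨habs, hint_rn⟩]
  congr 1
  rw [integral_congr_ae hae_log]
  -- compute the integral
  have hd : dens = (fun p => ((fun p : 𝓧 × Fin M =>
      Real.toNNReal (q p.2 p.1 / pr p.2)) p : ℝ≥0∞)) := rfl
  rw [hprod, hd, integral_withDensity_eq_integral_smul
    (by exact measurable_real_toNNReal.comp hrrm)]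
  have hsmul : ∀ p : 𝓧 × Fin M, Real.toNNReal (q p.2 p.1 / pr p.2) • Real.log (q p.2 p.1 / pr p.2)
      = (q p.2 p.1 / pr p.2) * Real.log (q p.2 p.1 / pr p.2) := by
    intro p
    simp only [NNReal.smul_def, smul_eq_mul, Real.coe_toNNReal _ (le_of_lt (hrr0 p))]
  simp_rw [hsmul]
  have hfint : Integrable (fun p : 𝓧 × Fin M =>
      (q p.2 p.1 / pr p.2) * Real.log (q p.2 p.1 / pr p.2)) Qm := by
    apply Integrable.mono' (integrable_const (Rq * Blog))
    · exact (hrrm.mul (Real.measurable_log.comp hrrm)).aestronglyMeasurable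
    · refine Filter.Eventually.of_forall (fun p => ?_)
      rw [Real.norm_eq_abs, abs_mul, abs_of_pos (hrr0 p)]
      apply mul_le_mul (hru p.1 p.2) (hlogbd p) (abs_nonneg _)
      exact le_trans (le_of_lt hεq) (le_trans (hrl p.1 p.2) (hru p.1 p.2))
  rw [hQm, integral_prod _ hfint]
  refine integral_congr_ae (Filter.Eventually.of_forall (fun x => ?_))
  dsimp only
  rw [integral_fintype]
  · refine Finset.sum_congr rfl (fun c _ => ?_)
    rw [map_measureReal_apply hC (measurableSet_singleton c), measureReal_def, ← hpreq c, smul_eq_mul]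
  · exact Integrable.of_finite


end SCaux

/-- third item of Proposition 2: with the optimal score
`s*(x,c) = log(p(c|x)/p(c))`, the shifted SoftNCE loss converges to the mutual
information: `lim_{N→∞} (log N − L_N(s*)) = I(X;C)`. -/
theorem stmt_7 {Ω 𝓧 : Type*} [MeasurableSpace Ω] [MeasurableSpace 𝓧]
    {M : ℕ} (μ : Measure Ω) [IsProbabilityMeasure μ]
    (X : Ω → 𝓧) (C : Ω → Fin M) (hX : Measurable X) (hC : Measurable C)
    (hpos : ∀ c : Fin M, 0 < μ (C ⁻¹' {c}))
    -- `pc c` is a fixed measurable version of the conditional probability `P(C = c | X = x)`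
    (pc : Fin M → 𝓧 → ℝ) (hpcmeas : ∀ c, Measurable (pc c))
    (hpcver : ∀ c, ∀ A : Set 𝓧, MeasurableSet A →
      ∫ x in A, pc c x ∂(μ.map X) = (μ (X ⁻¹' A ∩ C ⁻¹' {c})).toReal)
    (hpceps : ∃ ε : ℝ, 0 < ε ∧ ∀ c, ∀ᵐ x ∂(μ.map X), ε ≤ pc c x) :
    Tendsto (fun N : ℕ =>
        ((Real.log N - contrastiveLoss μ X C N
            (fun x c => Real.log (pc c x / (μ (C ⁻¹' {c})).toReal)) : ℝ) : EReal))
      atTop (𝓝 (mutualInfo μ X C)) := by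
    classical
  obtain ⟨ε₀, hε₀, hεae⟩ := hpceps
  haveI : IsProbabilityMeasure (μ.map X) := Measure.isProbabilityMeasure_map hX.aemeasurable
  set ν := μ.map X with hν
  have hc0 : ∀ c, μ (C ⁻¹' {c}) ≠ 0 := fun c => (hpos c).ne'
  set pr : Fin M → ℝ := fun c => (μ (C ⁻¹' {c})).toReal with hprdef
  have hpreq : ∀ c, pr c = (μ (C ⁻¹' {c})).toReal := fun c => rfl
  have hpr' : ∀ c, (μ (C ⁻¹' {c})).toReal = pr c := fun c => rfl
  have hprpos : ∀ c, 0 < pr c := fun c => ENNReal.toReal_pos (hc0 c) (measure_ne_top μ _)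
  have hprle1 : ∀ c, pr c ≤ 1 := by
    intro c
    rw [hpreq c]
    calc (μ (C ⁻¹' {c})).toReal ≤ (1 : ℝ≥0∞).toReal :=
          ENNReal.toReal_mono ENNReal.one_ne_top prob_le_one
    _ = 1 := ENNReal.toReal_one
  have hprsum : ∑ c, pr c = 1 := by
    have h := SCaux.fiber_sum_toReal μ hC (MeasurableSet.univ (α := Ω))
    simpa [Set.univ_inter, measure_univ] using h
  -- nonemptiness
  haveI hΩne : Nonempty Ω := by
    by_contra h
    rw [not_nonempty_iff] at h
    have h1 : μ Set.univ = 0 := by simp [Set.univ_eq_empty_iff.2 h]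
    rw [measure_univ] at h1
    exact one_ne_zero h1
  haveI hMne : Nonempty (Fin M) := ⟨C (Classical.ofNonempty)⟩
  -- a.e. facts about pc
  have h0 : ∀ c, ∀ᵐ x ∂ν, 0 ≤ pc c x :=
    fun c => (hεae c).mono (fun x hx => le_trans (le_of_lt hε₀) hx)
  have h1 : ∀ c, ∀ᵐ x ∂ν, pc c x ≤ 1 :=
    fun c => SCaux.pc_le_one μ hX hC c (hpcmeas c) (hpcver c)
  have hsum1 : ∀ᵐ x ∂ν, ∑ c, pc c x = 1 :=
    SCaux.sum_pc_eq_one μ hX hC pc hpcmeas hpcver h0 h1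
  -- the good set and modified conditional probability q
  set GF : Set 𝓧 := {x | (∀ c, ε₀ ≤ pc c x) ∧ (∀ c, pc c x ≤ 1) ∧ (∑ c, pc c x = 1)}
    with hGFdef
  have hGFm : MeasurableSet GF := by
    have e : GF = (⋂ c, {x | ε₀ ≤ pc c x}) ∩ ((⋂ c, {x | pc c x ≤ 1})
        ∩ {x | (∑ c, pc c x) = 1}) := by
      ext x
      simp only [hGFdef, Set.mem_setOf_eq, Set.mem_inter_iff, Set.mem_iInter]
    rw [e]
    refine (MeasurableSet.iInter (fun c =>
      measurableSet_le measurable_const (hpcmeas c))).inter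
      ((MeasurableSet.iInter (fun c =>
        measurableSet_le (hpcmeas c) measurable_const)).inter ?_)
    exact measurableSet_eq_fun (Finset.measurable_sum _ (fun c _ => hpcmeas c))
      measurable_const
  have hGFae : ∀ᵐ x ∂ν, x ∈ GF := by
    have ha : ∀ᵐ x ∂ν, ∀ c, ε₀ ≤ pc c x := (MeasureTheory.ae_all_iff).2 hεae
    have hb : ∀ᵐ x ∂ν, ∀ c, pc c x ≤ 1 := (MeasureTheory.ae_all_iff).2 h1
    filter_upwards [ha, hb, hsum1] with x hxa hxb hxc
    exact ⟨hxa, hxb, hxc⟩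
  set q : Fin M → 𝓧 → ℝ := fun c x => if x ∈ GF then pc c x else pr c with hqdef
  have hqmeas : ∀ c, Measurable (q c) :=
    fun c => Measurable.ite hGFm (hpcmeas c) measurable_const
  have hqae : ∀ᵐ x ∂ν, ∀ c, pc c x = q c x := by
    filter_upwards [hGFae] with x hx
    intro c
    rw [hqdef]
    simp [hx]
  -- q is bounded
  set pm : ℝ := Finset.univ.inf' Finset.univ_nonempty pr with hpmdef
  have hpm_pos : 0 < pm := (Finset.lt_inf'_iff _).2 (fun c _ => hprpos c)
  have hpm_le : ∀ c, pm ≤ pr c := fun c => Finset.inf'_le _ (Finset.mem_univ c)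
  set εq : ℝ := min ε₀ pm with hεqdef
  have hεq : 0 < εq := lt_min hε₀ hpm_pos
  set Rq : ℝ := 1 / pm with hRqdef
  have hqlow : ∀ c x, εq ≤ q c x := by
    intro c x
    rw [hqdef]
    by_cases hx : x ∈ GF
    · simp only [hx, if_true]
      exact le_trans (min_le_left _ _) (hx.1 c)
    · simp only [hx, if_false]
      exact le_trans (min_le_right _ _) (hpm_le c)
  have hqup : ∀ c x, q c x ≤ 1 := by
    intro c x
    rw [hqdef]
    by_cases hx : x ∈ GF
    · simp only [hx, if_true]
      exact hx.2.1 c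
    · simp only [hx, if_false]
      exact hprle1 c
  have hqsum : ∀ x, ∑ c, q c x = 1 := by
    intro x
    by_cases hx : x ∈ GF
    · rw [hqdef]
      simp only [hx, if_true]
      exact hx.2.2
    · rw [hqdef]
      simp only [hx, if_false]
      exact hprsum
  have hrl : ∀ x c, εq ≤ q c x / pr c := by
    intro x c
    rw [le_div_iff₀ (hprpos c)]
    calc εq * pr c ≤ εq * 1 := mul_le_mul_of_nonneg_left (hprle1 c) (le_of_lt hεq)
    _ = εq := mul_one _
    _ ≤ q c x := hqlow c x
  have hru : ∀ x c, q c x / pr c ≤ Rq := by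
    intro x c
    rw [hRqdef]
    exact div_le_div₀ zero_le_one (hqup c x) hpm_pos (hpm_le c)
  have hrr1 : ∀ x, ∑ c, pr c * (q c x / pr c) = 1 := by
    intro x
    have e : ∀ c, pr c * (q c x / pr c) = q c x := by
      intro c
      rw [mul_comm, div_mul_cancel₀ _ (ne_of_gt (hprpos c))]
    simp_rw [e]
    exact hqsum x
  have hq0' : ∀ c x, 0 ≤ q c x := fun c x => le_trans (le_of_lt hεq) (hqlow c x)
  have hqint : ∀ c, Integrable (q c) ν := by
    intro c
    apply Integrable.mono' (integrable_const (1:ℝ))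
    · exact (hqmeas c).aestronglyMeasurable
    · refine Filter.Eventually.of_forall (fun x => ?_)
      rw [Real.norm_eq_abs, abs_of_nonneg (hq0' c x)]
      exact hqup c x
  have hqver : ∀ c, ∀ A : Set 𝓧, MeasurableSet A →
      ∫ x in A, q c x ∂ν = (μ (X ⁻¹' A ∩ C ⁻¹' {c})).toReal := by
    intro c A hA
    rw [← hpcver c A hA]
    apply integral_congr_ae
    apply ae_restrict_of_ae
    filter_upwards [hqae] with x hx
    exact (hx c).symm
  have hκ : ∀ c, condLaw μ X C c
      = ν.withDensity (fun x => ENNReal.ofReal (q c x / pr c)) := by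
    intro c
    rw [hpreq c]
    exact SCaux.condLaw_eq μ hX hC c (hc0 c) (hqmeas c) (hq0' c) (hqint c) (hqver c)
  -- measurability of the loss integrand
  have hℓm : ∀ (N : ℕ) (i : Fin N), Measurable (fun p : 𝓧 × (Fin N → Fin M) =>
      -Real.log (Real.exp (Real.log (pc (p.2 i) p.1 / pr (p.2 i))) /
        ∑ j, Real.exp (Real.log (pc (p.2 j) p.1 / pr (p.2 j))))) := by
    intro N i
    apply measurable_from_prod_countable_left
    intro cs
    have hterm : ∀ c : Fin M, Measurable (fun x : 𝓧 =>
        Real.exp (Real.log (pc c x / pr c))) := fun c =>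
      Real.measurable_exp.comp (Real.measurable_log.comp ((hpcmeas c).div_const _))
    exact (Real.measurable_log.comp ((hterm (cs i)).div
      (Finset.measurable_sum Finset.univ (fun j _ => hterm (cs j))))).neg
  -- the limit value
  set I0 : ℝ := ∫ x, (∑ c, pr c * ((q c x / pr c) * Real.log (q c x / pr c))) ∂ν with hI0
  have hMI : mutualInfo μ X C = (I0 : EReal) := by
    rw [mutualInfo]
    exact SCaux.kl_eq μ hX hC hc0 pr hpreq q hqmeas hqint hqver hεq hrl hru
  -- the constant of the key bound
  set K : ℝ := Rq * (Rq + 1) + (Rq / εq) * (Rq + 1)^2 with hK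
  -- per-i identity
  have hper : ∀ (N : ℕ) (i : Fin N),
      Real.log N - ∫ p, -Real.log (Real.exp (Real.log (pc (p.2 i) p.1 / pr (p.2 i))) /
          ∑ j, Real.exp (Real.log (pc (p.2 j) p.1 / pr (p.2 j)))) ∂(Pmeas μ X C N i)
      = I0 - ∫ x, (∑ cs : Fin N → Fin M, (∏ j, pr (cs j)) *
          ((q (cs i) x / pr (cs i)) *
            Real.log ((∑ j, q (cs j) x / pr (cs j)) / N))) ∂ν := by
    intro N i
    have hN : 0 < N := i.pos
    have hn : (0:ℝ) < N := by exact_mod_cast hN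
    rw [SCaux.loss_integral μ hX hC hc0 pr hpreq pc q hqmeas hqae hεq hrl hru hκ N i
      (hℓm N i)]
    -- bound for the integrand pieces
    have hBc : ∀ (cs : Fin N → Fin M) (x : 𝓧),
        |(q (cs i) x / pr (cs i)) * (Real.log (∑ j, q (cs j) x / pr (cs j))
            - Real.log (q (cs i) x / pr (cs i)))|
          ≤ Rq * ((|Real.log ((N:ℝ) * εq)| + |Real.log ((N:ℝ) * Rq)|)
              + (|Real.log εq| + |Real.log Rq|)) := by
      intro cs x
      rw [abs_mul]
      apply mul_le_mul
      · rw [abs_of_nonneg (le_trans (le_of_lt hεq) (hrl x (cs i)))]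
        exact hru x (cs i)
      · have hb1 : |Real.log (∑ j, q (cs j) x / pr (cs j))|
            ≤ |Real.log ((N:ℝ) * εq)| + |Real.log ((N:ℝ) * Rq)| := by
          apply SCaux.abs_log_le (by positivity)
          · calc (N:ℝ) * εq = ∑ _j : Fin N, εq := by
                  rw [Finset.sum_const]; simp [mul_comm]
            _ ≤ ∑ j, q (cs j) x / pr (cs j) :=
                  Finset.sum_le_sum (fun j _ => hrl x (cs j))
          · calc ∑ j, q (cs j) x / pr (cs j) ≤ ∑ _j : Fin N, Rq :=
                  Finset.sum_le_sum (fun j _ => hru x (cs j))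
            _ = (N:ℝ) * Rq := by rw [Finset.sum_const]; simp [mul_comm]
        have hb2 : |Real.log (q (cs i) x / pr (cs i))| ≤ |Real.log εq| + |Real.log Rq| :=
          SCaux.abs_log_le hεq (hrl x (cs i)) (hru x (cs i))
        calc |Real.log (∑ j, q (cs j) x / pr (cs j))
              - Real.log (q (cs i) x / pr (cs i))|
            ≤ |Real.log (∑ j, q (cs j) x / pr (cs j))|
              + |Real.log (q (cs i) x / pr (cs i))| := abs_sub _ _
        _ ≤ _ := add_le_add hb1 hb2
      · exact abs_nonneg _
      · exact le_trans (le_of_lt hεq) (le_trans (hrl x Classical.ofNonempty) (hru x _))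
    have hfmeas : ∀ cs : Fin N → Fin M, Measurable (fun x : 𝓧 =>
        (q (cs i) x / pr (cs i)) * (Real.log (∑ j, q (cs j) x / pr (cs j))
          - Real.log (q (cs i) x / pr (cs i)))) := by
      intro cs
      apply Measurable.mul
      · exact (hqmeas (cs i)).div_const _
      · exact (Real.measurable_log.comp (Finset.measurable_sum Finset.univ
          (fun j _ => (hqmeas (cs j)).div_const _))).sub
          (Real.measurable_log.comp ((hqmeas (cs i)).div_const _))
    have hfint : ∀ cs : Fin N → Fin M, Integrable (fun x : 𝓧 =>
        (∏ j, pr (cs j)) * ((q (cs i) x / pr (cs i)) *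
          (Real.log (∑ j, q (cs j) x / pr (cs j))
            - Real.log (q (cs i) x / pr (cs i))))) ν := by
      intro cs
      apply Integrable.const_mul
      apply Integrable.mono' (integrable_const (Rq *
        ((|Real.log ((N:ℝ) * εq)| + |Real.log ((N:ℝ) * Rq)|)
          + (|Real.log εq| + |Real.log Rq|))))
      · exact (hfmeas cs).aestronglyMeasurable
      · exact Filter.Eventually.of_forall (fun x => hBc cs x)
    -- swap sum and integral
    have hswap : ∑ cs : Fin N → Fin M, (∏ j, pr (cs j)) *
        ∫ x, (q (cs i) x / pr (cs i)) * (Real.log (∑ j, q (cs j) x / pr (cs j))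
          - Real.log (q (cs i) x / pr (cs i))) ∂ν
        = ∫ x, (∑ cs : Fin N → Fin M, (∏ j, pr (cs j)) *
            ((q (cs i) x / pr (cs i)) * (Real.log (∑ j, q (cs j) x / pr (cs j))
              - Real.log (q (cs i) x / pr (cs i))))) ∂ν := by
      rw [integral_finset_sum _ (fun cs _ => hfint cs)]
      refine Finset.sum_congr rfl (fun cs _ => ?_)
      rw [integral_const_mul]
    rw [hswap]
    -- bring log N inside the integral
    have hlogN : Real.log N = ∫ _x, Real.log N ∂ν := by
      rw [integral_const, measureReal_def, measure_univ, ENNReal.toReal_one, one_smul]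
    rw [hlogN]
    rw [← integral_sub (integrable_const _)]
    swap
    · apply integrable_finset_sum
      intro cs _
      exact hfint cs
    -- pointwise identity via decomp
    have hpt : ∀ x : 𝓧, (Real.log N - ∑ cs : Fin N → Fin M, (∏ j, pr (cs j)) *
          ((q (cs i) x / pr (cs i)) * (Real.log (∑ j, q (cs j) x / pr (cs j))
            - Real.log (q (cs i) x / pr (cs i)))))
        = (∑ c, pr c * ((q c x / pr c) * Real.log (q c x / pr c)))
          - ∑ cs : Fin N → Fin M, (∏ j, pr (cs j)) *
              ((q (cs i) x / pr (cs i)) *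
                Real.log ((∑ j, q (cs j) x / pr (cs j)) / N)) := by
      intro x
      exact SCaux.decomp pr (fun c => q c x / pr c) hprsum (hrr1 x)
        (fun c => lt_of_lt_of_le hεq (hrl x c)) i
    have hcongr : ∫ x, (Real.log N - ∑ cs : Fin N → Fin M, (∏ j, pr (cs j)) *
          ((q (cs i) x / pr (cs i)) * (Real.log (∑ j, q (cs j) x / pr (cs j))
            - Real.log (q (cs i) x / pr (cs i))))) ∂ν
        = ∫ x, ((∑ c, pr c * ((q c x / pr c) * Real.log (q c x / pr c)))
          - ∑ cs : Fin N → Fin M, (∏ j, pr (cs j)) *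
              ((q (cs i) x / pr (cs i)) *
                Real.log ((∑ j, q (cs j) x / pr (cs j)) / N))) ∂ν :=
      integral_congr_ae (Filter.Eventually.of_forall (fun x => hpt x))
    rw [hcongr]
    -- split the integral
    have hint1 : Integrable (fun x => ∑ c, pr c * ((q c x / pr c)
        * Real.log (q c x / pr c))) ν := by
      apply integrable_finset_sum
      intro c _
      apply Integrable.const_mul
      apply Integrable.mono' (integrable_const (Rq * (|Real.log εq| + |Real.log Rq|)))
      · exact ((hqmeas c).div_const _ |>.mul
          (Real.measurable_log.comp ((hqmeas c).div_const _))).aestronglyMeasurable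
      · refine Filter.Eventually.of_forall (fun x => ?_)
        rw [Real.norm_eq_abs, abs_mul]
        apply mul_le_mul
        · rw [abs_of_nonneg (le_trans (le_of_lt hεq) (hrl x c))]
          exact hru x c
        · exact SCaux.abs_log_le hεq (hrl x c) (hru x c)
        · exact abs_nonneg _
        · exact le_trans (le_of_lt hεq) (le_trans (hrl x c) (hru x c))
    have hint2 : Integrable (fun x => ∑ cs : Fin N → Fin M, (∏ j, pr (cs j)) *
        ((q (cs i) x / pr (cs i)) *
          Real.log ((∑ j, q (cs j) x / pr (cs j)) / N))) ν := by
      apply integrable_finset_sum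
      intro cs _
      apply Integrable.const_mul
      apply Integrable.mono' (integrable_const (Rq *
        (|Real.log εq| + |Real.log ((N:ℝ) * Rq / N)| + |Real.log (εq / N)|
          + |Real.log Rq|)))
      · exact ((hqmeas (cs i)).div_const _ |>.mul (Real.measurable_log.comp
          ((Finset.measurable_sum Finset.univ (fun j _ =>
            (hqmeas (cs j)).div_const _)).div_const _))).aestronglyMeasurable
      · refine Filter.Eventually.of_forall (fun x => ?_)
        rw [Real.norm_eq_abs, abs_mul]
        have hsumlb : εq ≤ (∑ j, q (cs j) x / pr (cs j)) / N := by
          rw [le_div_iff₀ hn]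
          calc εq * N = ∑ _j : Fin N, εq := by rw [Finset.sum_const]; simp [mul_comm]
          _ ≤ ∑ j, q (cs j) x / pr (cs j) :=
              Finset.sum_le_sum (fun j _ => hrl x (cs j))
        have hsumub : (∑ j, q (cs j) x / pr (cs j)) / N ≤ Rq := by
          rw [div_le_iff₀ hn]
          calc ∑ j, q (cs j) x / pr (cs j) ≤ ∑ _j : Fin N, Rq :=
              Finset.sum_le_sum (fun j _ => hru x (cs j))
          _ = Rq * N := by rw [Finset.sum_const]; simp [mul_comm]
        have hlb : |Real.log ((∑ j, q (cs j) x / pr (cs j)) / N)|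
            ≤ |Real.log εq| + |Real.log Rq| := SCaux.abs_log_le hεq hsumlb hsumub
        have h1 : |q (cs i) x / pr (cs i)| ≤ Rq := by
          rw [abs_of_nonneg (le_trans (le_of_lt hεq) (hrl x (cs i)))]
          exact hru x (cs i)
        calc |q (cs i) x / pr (cs i)| *
              |Real.log ((∑ j, q (cs j) x / pr (cs j)) / N)|
            ≤ Rq * (|Real.log εq| + |Real.log Rq|) := by
              apply mul_le_mul h1 hlb (abs_nonneg _)
              exact le_trans (le_of_lt hεq)
                (le_trans (hrl x Classical.ofNonempty) (hru x _))
        _ ≤ Rq * (|Real.log εq| + |Real.log ((N:ℝ) * Rq / N)| + |Real.log (εq / N)|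
              + |Real.log Rq|) := by
            apply mul_le_mul_of_nonneg_left _ (le_trans (le_of_lt hεq)
              (le_trans (hrl x Classical.ofNonempty) (hru x _)))
            have := abs_nonneg (Real.log ((N:ℝ) * Rq / N))
            have := abs_nonneg (Real.log (εq / N))
            linarith
    rw [integral_sub hint1 hint2]
  -- bound on the error integral
  have herr : ∀ (N : ℕ) (i : Fin N),
      |∫ x, (∑ cs : Fin N → Fin M, (∏ j, pr (cs j)) *
          ((q (cs i) x / pr (cs i)) *
            Real.log ((∑ j, q (cs j) x / pr (cs j)) / N))) ∂ν| ≤ K / N := by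
    intro N i
    have hptbd : ∀ x : 𝓧, ‖∑ cs : Fin N → Fin M, (∏ j, pr (cs j)) *
        ((q (cs i) x / pr (cs i)) *
          Real.log ((∑ j, q (cs j) x / pr (cs j)) / N))‖ ≤ K / N := by
      intro x
      rw [Real.norm_eq_abs]
      have := SCaux.key_bound pr (fun c => q c x / pr c)
        (fun c => le_of_lt (hprpos c)) hprsum (hrr1 x) hεq
        (fun c => hrl x c) (fun c => hru x c) i
      rw [hK]
      convert this using 3
    have := norm_integral_le_of_norm_le_const (μ := ν)
      (Filter.Eventually.of_forall hptbd)
    rwa [measureReal_def, measure_univ, ENNReal.toReal_one, mul_one, Real.norm_eq_abs] at this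
  -- final assembly: the sequence identity and bound
  have hKnonneg : 0 ≤ K := by
    have hRq0 : 0 < Rq := by
      rw [hRqdef]; positivity
    rw [hK]
    have h1 : 0 ≤ Rq / εq := div_nonneg (le_of_lt hRq0) (le_of_lt hεq)
    nlinarith [sq_nonneg (Rq + 1)]
  have hseq : ∀ N : ℕ, 1 ≤ N →
      |(Real.log N - contrastiveLoss μ X C N
          (fun x c => Real.log (pc c x / (μ (C ⁻¹' {c})).toReal)) : ℝ) - I0| ≤ K / N := by
    intro N hN1
    have hn : (0:ℝ) < N := by exact_mod_cast hN1
    have halg : ∀ g : Fin N → ℝ, (∀ i, |g i| ≤ K / N) →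
        |Real.log N - (1 / N) * (∑ i : Fin N, (Real.log N - (I0 - g i))) - I0|
          ≤ K / N := by
      intro g hg
      have hsum : ∑ i : Fin N, (Real.log N - (I0 - g i))
          = N * (Real.log N - I0) + ∑ i : Fin N, g i := by
        have e : ∀ i : Fin N, Real.log N - (I0 - g i) = (Real.log N - I0) + g i :=
          fun i => by ring
        simp_rw [e]
        rw [Finset.sum_add_distrib, Finset.sum_const, Finset.card_univ,
          Fintype.card_fin, nsmul_eq_mul]
      rw [hsum]
      have he : Real.log N - (1 / N) * ((N:ℝ) * (Real.log N - I0) + ∑ i : Fin N, g i) - I0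
          = -((1/N) * ∑ i : Fin N, g i) := by
        field_simp
        ring
      rw [he, abs_neg, abs_mul, abs_of_pos (show (0:ℝ) < 1/N by positivity)]
      calc (1/(N:ℝ)) * |∑ i : Fin N, g i| ≤ (1/(N:ℝ)) * ∑ i : Fin N, |g i| :=
            mul_le_mul_of_nonneg_left (Finset.abs_sum_le_sum_abs _ _) (by positivity)
      _ ≤ (1/(N:ℝ)) * ∑ _i : Fin N, (K / N) :=
            mul_le_mul_of_nonneg_left (Finset.sum_le_sum (fun i _ => hg i))
              (by positivity)
      _ = K / N := by
            rw [Finset.sum_const, Finset.card_univ, Fintype.card_fin, nsmul_eq_mul]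
            field_simp
    have hloss : contrastiveLoss μ X C N
        (fun x c => Real.log (pc c x / (μ (C ⁻¹' {c})).toReal))
        = (1 / N) * ∑ i : Fin N,
          ∫ p, -Real.log (Real.exp (Real.log (pc (p.2 i) p.1 / pr (p.2 i))) /
            ∑ j, Real.exp (Real.log (pc (p.2 j) p.1 / pr (p.2 j)))) ∂(Pmeas μ X C N i) := by
      rw [contrastiveLoss]
    rw [hloss]
    have hsum_i : ∑ i : Fin N,
        ∫ p, -Real.log (Real.exp (Real.log (pc (p.2 i) p.1 / pr (p.2 i))) /
          ∑ j, Real.exp (Real.log (pc (p.2 j) p.1 / pr (p.2 j)))) ∂(Pmeas μ X C N i)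
        = ∑ i : Fin N, (Real.log N - (I0 - ∫ x,
            (∑ cs : Fin N → Fin M, (∏ j, pr (cs j)) * ((q (cs i) x / pr (cs i)) *
              Real.log ((∑ j, q (cs j) x / pr (cs j)) / N))) ∂ν)) := by
      refine Finset.sum_congr rfl (fun i _ => ?_)
      have h := hper N i
      linarith
    rw [hsum_i]
    exact halg _ (fun i => herr N i)
  -- conclude via squeeze
  rw [hMI]
  rw [EReal.tendsto_coe]
  have hdiff : Tendsto (fun N : ℕ => (Real.log N - contrastiveLoss μ X C N
      (fun x c => Real.log (pc c x / (μ (C ⁻¹' {c})).toReal)) : ℝ) - I0) atTop (𝓝 0) := by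
    apply squeeze_zero_norm' (a := fun N : ℕ => K / N)
    · filter_upwards [Filter.eventually_atTop.2 ⟨1, fun N hN => hseq N hN⟩] with N hN
      exact hN
    · exact tendsto_const_div_atTop_nhds_zero_nat K
  have := hdiff.add (tendsto_const_nhds (x := I0))
  simp only [zero_add] at this
  convert this using 2 with N
  ring
end

section
/- Under the boundedness assumption on the density ratio, the expected logarithm of the self-normalizing denominator vanishes in the limit: lim_{N→∞} E[ log( (1/N) ( p(C|X)/p(C) + Σ_{j=2}^N p(C_j|X)/p(C_j) ) ) ] = 0. -/
open MeasureTheory ProbabilityTheory Filter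
open scoped Topology

/-- Taylor-type estimate for the logarithm: for `t ≥ ε > 0`,
`|log t - (t-1)| ≤ (t-1)²/ε`. -/
lemma aux_log_est {ε t : ℝ} (hε : 0 < ε) (ht : ε ≤ t) :
    |Real.log t - (t - 1)| ≤ (t - 1) ^ 2 / ε := by
  have htpos : 0 < t := lt_of_lt_of_le hε ht
  rw [abs_le]
  constructor
  · have h1 : Real.log t⁻¹ ≤ t⁻¹ - 1 := Real.log_le_sub_one_of_pos (by positivity)
    rw [Real.log_inv] at h1
    have h2 : (t - 1) / t ≤ Real.log t := by
      have h5 : 1 - t⁻¹ ≤ Real.log t := by linarith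
      have h6 : (t - 1) / t = 1 - t⁻¹ := by field_simp
      linarith
    have h3 : (t - 1) - (t - 1) / t = (t - 1) ^ 2 / t := by
      field_simp
    have h4 : (t - 1) ^ 2 / t ≤ (t - 1) ^ 2 / ε := by
      gcongr
    linarith
  · have h7 : (0:ℝ) ≤ (t - 1) ^ 2 / ε := by positivity
    linarith [Real.log_le_sub_one_of_pos htpos]

/-- Integral of a single-coordinate function against a finite product of copies of a
probability measure on `Fin M`. -/
lemma aux_pi_one {M n : ℕ} (ν : Measure (Fin M)) [IsProbabilityMeasure ν] (f : Fin M → ℝ)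
    (i : Fin n) :
    ∫ ω : Fin n → Fin M, f (ω i) ∂(Measure.pi fun _ => ν) = ∫ c, f c ∂ν := by
  letI : MeasureSpace (Fin M) := ⟨ν⟩
  haveI : SigmaFinite (volume : Measure (Fin M)) := by
    change SigmaFinite ν; infer_instance
  have key := MeasureTheory.integral_fintype_prod_eq_prod (𝕜 := ℝ) (ι := Fin n) (μ := fun _ => volume)
    (f := fun k (c : Fin M) => if k = i then f c else 1)
  have h1 : ∀ ω : Fin n → Fin M, (∏ k, if k = i then f (ω k) else 1) = f (ω i) := by
    intro ω
    rw [Finset.prod_eq_single i (fun k _ hk => by simp [hk]) (by simp)]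
    simp
  have h2 : (∏ k : Fin n, ∫ c : Fin M, if k = i then f c else 1) = ∫ c, f c ∂ν := by
    rw [Finset.prod_eq_single i (fun k _ hk => by simp [hk]) (by simp)]
    simp
    rfl
  simp only [h1] at key
  rw [← h2]
  exact key

/-- Independence of distinct coordinates under a finite product of copies of a probability
measure on `Fin M`: the integral of a product of functions of two distinct coordinates
factorizes. -/
lemma aux_pi_two {M n : ℕ} (ν : Measure (Fin M)) [IsProbabilityMeasure ν] (f : Fin M → ℝ)
    (i j : Fin n) (hij : i ≠ j) :
    ∫ ω : Fin n → Fin M, f (ω i) * f (ω j) ∂(Measure.pi fun _ => ν)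
      = (∫ c, f c ∂ν) * (∫ c, f c ∂ν) := by
  letI : MeasureSpace (Fin M) := ⟨ν⟩
  haveI : SigmaFinite (volume : Measure (Fin M)) := by
    change SigmaFinite ν; infer_instance
  have key := MeasureTheory.integral_fintype_prod_eq_prod (𝕜 := ℝ) (ι := Fin n) (μ := fun _ => volume)
    (f := fun k (c : Fin M) => if k ∈ ({i, j} : Finset (Fin n)) then f c else 1)
  have h1 : ∀ ω : Fin n → Fin M, (∏ k, if k ∈ ({i, j} : Finset (Fin n)) then f (ω k) else 1)
      = f (ω i) * f (ω j) := by
    intro ω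
    rw [Finset.prod_ite_mem, Finset.univ_inter, Finset.prod_pair hij]
  have h2 : (∏ k : Fin n, ∫ c : Fin M, if k ∈ ({i, j} : Finset (Fin n)) then f c else 1)
      = (∫ c, f c ∂ν) * (∫ c, f c ∂ν) := by
    have : ∀ k : Fin n, (∫ c : Fin M, if k ∈ ({i, j} : Finset (Fin n)) then f c else 1)
        = if k ∈ ({i, j} : Finset (Fin n)) then ∫ c, f c ∂ν else 1 := by
      intro k
      split_ifs with h
      · rfl
      · simp
    simp only [this]
    rw [Finset.prod_ite_mem, Finset.univ_inter, Finset.prod_pair hij]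
  simp only [h1] at key
  rw [← h2]
  exact key

/-- An average of `m + 1` numbers, each lying in `[ε, B]`, lies in `[ε, B]`. -/
lemma aux_avg_bound {m : ℕ} (ε B a : ℝ) (b : Fin m → ℝ) (hεa : ε ≤ a) (haB : a ≤ B)
    (hεb : ∀ j, ε ≤ b j) (hbB : ∀ j, b j ≤ B) :
    ε ≤ (1 / ((m:ℝ) + 1)) * (a + ∑ j, b j) ∧ (1 / ((m:ℝ) + 1)) * (a + ∑ j, b j) ≤ B := by
  have hm : (0:ℝ) < (m:ℝ) + 1 := by positivity
  have hlb : (m:ℝ) * ε ≤ ∑ j, b j := by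
    have h := Finset.card_nsmul_le_sum Finset.univ b ε (fun j _ => hεb j)
    simpa [nsmul_eq_mul, Finset.card_univ] using h
  have hub : ∑ j, b j ≤ (m:ℝ) * B := by
    have h := Finset.sum_le_card_nsmul Finset.univ b B (fun j _ => hbB j)
    simpa [nsmul_eq_mul, Finset.card_univ] using h
  constructor
  · have h1 : ε * ((m:ℝ)+1) ≤ a + ∑ j, b j := by nlinarith
    calc ε = (1/((m:ℝ)+1)) * (ε * ((m:ℝ)+1)) := by field_simp
      _ ≤ (1/((m:ℝ)+1)) * (a + ∑ j, b j) := mul_le_mul_of_nonneg_left h1 (by positivity)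
  · have h1 : a + ∑ j, b j ≤ B * ((m:ℝ)+1) := by nlinarith
    calc (1/((m:ℝ)+1)) * (a + ∑ j, b j) ≤ (1/((m:ℝ)+1)) * (B * ((m:ℝ)+1)) :=
          mul_le_mul_of_nonneg_left h1 (by positivity)
      _ = B := by field_simp

/-- If `ε ≤ t ≤ B` with `0 < ε ≤ 1 ≤ B`, then `‖log t‖ ≤ log B - log ε`. -/
lemma aux_log_abs {ε B t : ℝ} (hε : 0 < ε) (hε1 : ε ≤ 1) (hB : 1 ≤ B)
    (h1 : ε ≤ t) (h2 : t ≤ B) : ‖Real.log t‖ ≤ Real.log B - Real.log ε := by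
  have ht : 0 < t := lt_of_lt_of_le hε h1
  rw [Real.norm_eq_abs, abs_le]
  constructor
  · have ha : Real.log ε ≤ Real.log t := Real.log_le_log hε h1
    have hb : 0 ≤ Real.log B := Real.log_nonneg hB
    linarith
  · have ha : Real.log t ≤ Real.log B := Real.log_le_log ht h2
    have hb : Real.log ε ≤ 0 := Real.log_nonpos hε.le hε1
    linarith

/-- Core quantitative estimate: if `g : Fin M → ℝ` satisfies `ε ≤ g ≤ B` and has
`ν`-mean `1`, then the expected logarithm of the empirical average
`(1/(n+1)) (g c + ∑_j g(ω_j))` over `ν^{⊗ n}` is bounded by `(B + B²/ε)/(n+1)`. -/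
lemma aux_main {M n : ℕ} (ν : Measure (Fin M)) [IsProbabilityMeasure ν]
    (g : Fin M → ℝ) (c : Fin M) (ε B : ℝ) (hε : 0 < ε)
    (hεg : ∀ c', ε ≤ g c') (hgB : ∀ c', g c' ≤ B)
    (hmean : ∫ c', g c' ∂ν = 1) :
    ‖∫ ω : Fin n → Fin M,
        Real.log ((1 / ((n : ℝ) + 1)) * (g c + ∑ j, g (ω j))) ∂(Measure.pi fun _ => ν)‖
      ≤ (B + B ^ 2 / ε) / ((n : ℝ) + 1) := by
  have hε1 : ε ≤ 1 := by
    have h1 : ∫ _ : Fin M, ε ∂ν ≤ ∫ c', g c' ∂ν := integral_mono (integrable_const ε) .of_finite hεg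
    rw [hmean, integral_const] at h1
    simpa using h1
  have hB1 : 1 ≤ B := by
    have h1 : ∫ c', g c' ∂ν ≤ ∫ _ : Fin M, B ∂ν := integral_mono .of_finite (integrable_const B) hgB
    rw [hmean, integral_const] at h1
    simpa using h1
  have hNr0 : (0:ℝ) < (n:ℝ) + 1 := by positivity
  obtain ⟨S, hS⟩ : ∃ S : (Fin n → Fin M) → ℝ,
      S = fun ω => (1 / ((n : ℝ) + 1)) * (g c + ∑ j, g (ω j)) := ⟨_, rfl⟩
  obtain ⟨Gf, hGf⟩ : ∃ Gf : Fin M → ℝ, Gf = fun c' => g c' - 1 := ⟨_, rfl⟩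
  have hrw : (fun ω : Fin n → Fin M => Real.log ((1 / ((n : ℝ) + 1)) * (g c + ∑ j, g (ω j))))
      = fun ω => Real.log (S ω) := by rw [hS]
  rw [hrw]
  have hSb : ∀ ω, ε ≤ S ω ∧ S ω ≤ B := by
    intro ω; rw [hS]
    exact aux_avg_bound ε B (g c) (fun j => g (ω j)) (hεg c) (hgB c)
      (fun j => hεg _) (fun j => hgB _)
  have hGb : ∀ c', Gf c' ^ 2 ≤ B ^ 2 := by
    intro c'; rw [hGf]
    show (g c' - 1) ^ 2 ≤ B ^ 2
    nlinarith [mul_nonneg (by linarith [hgB c'] : (0:ℝ) ≤ B - g c' + 1)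
      (by linarith [hεg c', hε] : (0:ℝ) ≤ B + g c' - 1)]
  have hGmean : ∫ c', Gf c' ∂ν = 0 := by
    rw [hGf, integral_sub .of_finite (integrable_const 1), hmean, integral_const]
    simp
  have hD : ∀ ω, S ω - 1 = (1 / ((n:ℝ)+1)) * (Gf c + ∑ j, Gf (ω j)) := by
    intro ω
    rw [hS, hGf]
    simp only [Finset.sum_sub_distrib, Finset.sum_const, Finset.card_univ, Fintype.card_fin,
      nsmul_eq_mul, mul_one]
    field_simp
    ring
  have hzero : ∀ j : Fin n, ∫ ω : Fin n → Fin M, Gf (ω j) ∂(Measure.pi fun _ => ν) = 0 :=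
    fun j => (aux_pi_one ν Gf j).trans hGmean
  have hIS : ∫ ω, (S ω - 1) ∂(Measure.pi fun _ : Fin n => ν) = Gf c / ((n:ℝ)+1) := by
    simp only [hD]
    rw [integral_const_mul, integral_add (integrable_const _) .of_finite, integral_const,
      integral_finset_sum _ (fun j _ => Integrable.of_finite)]
    simp only [hzero, Finset.sum_const_zero, add_zero, measure_univ, ENNReal.toReal_one, probReal_univ,
      smul_eq_mul, one_mul]
    ring
  have hIS2 : ∫ ω, (S ω - 1)^2 ∂(Measure.pi fun _ : Fin n => ν) ≤ B^2 / ((n:ℝ)+1) := by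
    have hsq : ∀ ω : Fin n → Fin M, (S ω - 1)^2
        = (1/((n:ℝ)+1))^2 * (Gf c^2 + (2 * Gf c) * (∑ j, Gf (ω j))
            + ∑ i, ∑ j, Gf (ω i) * Gf (ω j)) := by
      intro ω
      rw [hD ω, ← Finset.sum_mul_sum]
      ring
    have hdouble : ∫ ω, (∑ i, ∑ j, Gf (ω i) * Gf (ω j)) ∂(Measure.pi fun _ : Fin n => ν)
        ≤ (n:ℝ) * B^2 := by
      rw [integral_finset_sum _ fun i _ => Integrable.of_finite]
      have h1 : ∀ i : Fin n, ∫ ω, (∑ j, Gf (ω i) * Gf (ω j)) ∂(Measure.pi fun _ : Fin n => ν)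
          = ∑ j, ∫ ω, Gf (ω i) * Gf (ω j) ∂(Measure.pi fun _ : Fin n => ν) :=
        fun i => integral_finset_sum _ fun j _ => Integrable.of_finite
      have h2 : ∀ i j : Fin n, ∫ ω, Gf (ω i) * Gf (ω j) ∂(Measure.pi fun _ : Fin n => ν)
          ≤ if i = j then B^2 else 0 := by
        intro i j
        by_cases hij : i = j
        · subst hij
          rw [if_pos rfl]
          have e : ∫ ω : Fin n → Fin M, Gf (ω i) * Gf (ω i) ∂(Measure.pi fun _ => ν)
              = ∫ c', Gf c' * Gf c' ∂ν := aux_pi_one ν (fun c' => Gf c' * Gf c') i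
          rw [e]
          have h3 : ∫ c', Gf c' * Gf c' ∂ν ≤ ∫ _ : Fin M, B^2 ∂ν :=
            integral_mono .of_finite (integrable_const _) (fun c' => by nlinarith [hGb c'])
          rw [integral_const] at h3
          simpa using h3
        · rw [if_neg hij, aux_pi_two ν Gf i j hij, hGmean, mul_zero]
      calc ∑ i : Fin n, ∫ ω, (∑ j, Gf (ω i) * Gf (ω j)) ∂(Measure.pi fun _ : Fin n => ν)
          = ∑ i : Fin n, ∑ j : Fin n,
              ∫ ω, Gf (ω i) * Gf (ω j) ∂(Measure.pi fun _ : Fin n => ν) :=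
            Finset.sum_congr rfl fun i _ => h1 i
        _ ≤ ∑ i : Fin n, ∑ j : Fin n, (if i = j then B^2 else 0) :=
            Finset.sum_le_sum fun i _ => Finset.sum_le_sum fun j _ => h2 i j
        _ = ∑ _i : Fin n, B^2 := Finset.sum_congr rfl fun i _ => by simp
        _ = (n:ℝ) * B^2 := by
            simp [Finset.sum_const, Finset.card_univ, nsmul_eq_mul]
    have hrest : ∫ ω, (Gf c^2 + (2 * Gf c) * (∑ j, Gf (ω j))
          + ∑ i, ∑ j, Gf (ω i) * Gf (ω j)) ∂(Measure.pi fun _ : Fin n => ν)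
        ≤ B^2 + (n:ℝ)*B^2 := by
      rw [integral_add .of_finite .of_finite, integral_add (integrable_const _) .of_finite,
          integral_const, integral_const_mul,
          integral_finset_sum _ fun j _ => Integrable.of_finite]
      simp only [hzero, Finset.sum_const_zero, mul_zero, add_zero, measure_univ,
        ENNReal.toReal_one, probReal_univ, smul_eq_mul, one_mul]
      linarith [hdouble, hGb c]
    simp only [hsq]
    rw [integral_const_mul]
    refine le_trans (mul_le_mul_of_nonneg_left hrest (by positivity)) (le_of_eq ?_)
    field_simp
    ring
  have hptw : ∀ ω, ‖Real.log (S ω) - (S ω - 1)‖ ≤ (S ω - 1)^2 / ε := by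
    intro ω; rw [Real.norm_eq_abs]; exact aux_log_est hε (hSb ω).1
  have hsplit : ∫ ω, Real.log (S ω) ∂(Measure.pi fun _ : Fin n => ν)
      = (∫ ω, (Real.log (S ω) - (S ω - 1)) ∂(Measure.pi fun _ : Fin n => ν))
        + ∫ ω, (S ω - 1) ∂(Measure.pi fun _ : Fin n => ν) := by
    rw [← integral_add .of_finite .of_finite]
    simp
  rw [hsplit]
  have h4 : ‖∫ ω, (Real.log (S ω) - (S ω - 1)) ∂(Measure.pi fun _ : Fin n => ν)‖
      ≤ (B^2/((n:ℝ)+1))/ε := by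
    refine le_trans (norm_integral_le_integral_norm _) ?_
    have h5 : ∫ ω, ‖Real.log (S ω) - (S ω - 1)‖ ∂(Measure.pi fun _ : Fin n => ν)
        ≤ ∫ ω, (S ω - 1)^2/ε ∂(Measure.pi fun _ : Fin n => ν) :=
      integral_mono .of_finite .of_finite hptw
    rw [integral_div] at h5
    refine le_trans h5 ?_
    gcongr
  have h6 : ‖∫ ω, (S ω - 1) ∂(Measure.pi fun _ : Fin n => ν)‖ ≤ B/((n:ℝ)+1) := by
    rw [hIS, Real.norm_eq_abs, abs_div, abs_of_pos hNr0]
    gcongr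
    rw [hGf, abs_le]
    constructor
    · simp only
      linarith [hεg c, hε, hB1]
    · simp only
      linarith [hgB c, hB1]
  refine le_trans (norm_add_le _ _) (le_trans (add_le_add h4 h6) (le_of_eq ?_))
  field_simp
  ring

/-- key step in the proof of the third item of Proposition 2:
under the boundedness assumption on the density ratio, the expected logarithm of the
self-normalizing denominator vanishes in the limit:
`lim_{N→∞} E[ log( (1/N)( p(C|X)/p(C) + Σ_{j=2}^N p(C_j|X)/p(C_j) ) ) ] = 0`,
where `C_2, C_3, …` are i.i.d. copies of `C` independent of `(X, C)`. -/
theorem stmt_8 {Ω 𝓧 : Type*} [MeasurableSpace Ω] [MeasurableSpace 𝓧]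
    {M : ℕ} (μ : Measure Ω) [IsProbabilityMeasure μ]
    (X : Ω → 𝓧) (C : Ω → Fin M) (hX : Measurable X) (hC : Measurable C)
    (hpos : ∀ c : Fin M, 0 < μ (C ⁻¹' {c}))
    -- `pc c` is a fixed measurable version of the conditional probability `P(C = c | X = x)`
    (pc : Fin M → 𝓧 → ℝ) (hpcmeas : ∀ c, Measurable (pc c))
    (hpcver : ∀ c, ∀ A : Set 𝓧, MeasurableSet A →
      ∫ x in A, pc c x ∂(μ.map X) = (μ (X ⁻¹' A ∩ C ⁻¹' {c})).toReal)
    (hpceps : ∃ ε : ℝ, 0 < ε ∧ ∀ c, ∀ᵐ x ∂(μ.map X), ε ≤ pc c x) :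
    Tendsto (fun N : ℕ =>
        ∫ z, Real.log ((1 / N) *
            (pc z.1.2 z.1.1 / (μ (C ⁻¹' {z.1.2})).toReal +
              ∑ j : Fin (N - 1), pc (z.2 j) z.1.1 / (μ (C ⁻¹' {z.2 j})).toReal))
          ∂((μ.map (fun ω => (X ω, C ω))).prod (Measure.pi fun _ : Fin (N - 1) => μ.map C)))
      atTop (𝓝 0) := by
  haveI hPX : IsProbabilityMeasure (μ.map X) := Measure.isProbabilityMeasure_map hX.aemeasurable
  haveI hPC : IsProbabilityMeasure (μ.map C) := Measure.isProbabilityMeasure_map hC.aemeasurable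
  haveI hPXC : IsProbabilityMeasure (μ.map fun ω => (X ω, C ω)) :=
    Measure.isProbabilityMeasure_map (hX.prodMk hC).aemeasurable
  obtain ⟨ε, hε, hεpc⟩ := hpceps
  -- basic facts about the class probabilities
  have hppos : ∀ c, 0 < (μ (C ⁻¹' {c})).toReal :=
    fun c => ENNReal.toReal_pos (hpos c).ne' (measure_ne_top μ _)
  have hple1 : ∀ c, (μ (C ⁻¹' {c})).toReal ≤ 1 := by
    intro c
    simpa using ENNReal.toReal_mono ENNReal.one_ne_top
      (prob_le_one (μ := μ) (s := C ⁻¹' {c}))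
  obtain ⟨B, hBdef⟩ : ∃ B : ℝ, B = ∑ c, ((μ (C ⁻¹' {c})).toReal)⁻¹ := ⟨_, rfl⟩
  have hBc : ∀ c, ((μ (C ⁻¹' {c})).toReal)⁻¹ ≤ B := by
    intro c; rw [hBdef]
    exact Finset.single_le_sum (f := fun c' => ((μ (C ⁻¹' {c'})).toReal)⁻¹)
      (fun c' _ => by positivity) (Finset.mem_univ c)
  -- integrability of the conditional densities
  have hInt : ∀ c, Integrable (pc c) (μ.map X) := by
    intro c
    by_contra hni
    have h0 := hpcver c Set.univ MeasurableSet.univ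
    rw [Measure.restrict_univ, integral_undef hni] at h0
    rw [Set.preimage_univ, Set.univ_inter] at h0
    exact (hppos c).ne h0
  -- pointwise a.e. upper bound `pc c ≤ 1`
  have h_le1 : ∀ c, ∀ᵐ x ∂(μ.map X), pc c x ≤ 1 := by
    intro c
    refine ae_le_of_forall_setIntegral_le (hInt c) (integrable_const 1) fun s hs _ => ?_
    rw [hpcver c s hs, setIntegral_const, smul_eq_mul, mul_one,
      map_measureReal_apply hX hs]
    exact ENNReal.toReal_mono (measure_ne_top μ _) (measure_mono Set.inter_subset_left)
  -- a.e. the conditional probabilities sum to one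
  have h_sum1 : (fun x => ∑ c, pc c x) =ᵐ[μ.map X] fun _ => (1:ℝ) := by
    refine ae_eq_of_forall_setIntegral_eq_of_sigmaFinite
      (fun s _ _ => (integrable_finset_sum _ fun c _ => hInt c).integrableOn)
      (fun s _ _ => (integrable_const 1).integrableOn) fun s hs _ => ?_
    rw [integral_finset_sum _ fun c _ => (hInt c).integrableOn]
    rw [setIntegral_const, smul_eq_mul, mul_one, map_measureReal_apply hX hs, measureReal_def]
    have hU : X ⁻¹' s = ⋃ c, (X ⁻¹' s ∩ C ⁻¹' {c}) := by
      ext ω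
      simp only [Set.mem_preimage, Set.mem_iUnion, Set.mem_inter_iff, Set.mem_singleton_iff]
      exact ⟨fun h => ⟨C ω, h, rfl⟩, fun ⟨c, h, _⟩ => h⟩
    have hdisj : Pairwise (Function.onFun Disjoint fun c => X ⁻¹' s ∩ C ⁻¹' {c}) := by
      intro c c' hne
      rw [Function.onFun, Set.disjoint_left]
      rintro ω ⟨_, h1⟩ ⟨_, h2⟩
      exact hne (h1.symm.trans h2)
    have hmeas : ∀ c, MeasurableSet (X ⁻¹' s ∩ C ⁻¹' {c}) :=
      fun c => (hX hs).inter (hC (measurableSet_singleton c))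
    rw [hU, measure_iUnion hdisj hmeas, tsum_fintype]
    rw [ENNReal.toReal_sum fun c _ => measure_ne_top μ _]
    exact Finset.sum_congr rfl fun c _ => hpcver c s hs
  -- good set
  obtain ⟨G, hGdef⟩ : ∃ G : Set 𝓧,
      G = {x | (∀ c, ε ≤ pc c x ∧ pc c x ≤ 1) ∧ ∑ c, pc c x = 1} := ⟨_, rfl⟩
  have hGmem : ∀ x ∈ G, (∀ c, ε ≤ pc c x ∧ pc c x ≤ 1) ∧ ∑ c, pc c x = 1 := by
    intro x hx; rw [hGdef] at hx; exact hx
  have hGmeas : MeasurableSet G := by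
    rw [hGdef]
    have : {x : 𝓧 | (∀ c, ε ≤ pc c x ∧ pc c x ≤ 1) ∧ ∑ c, pc c x = 1}
        = (⋂ c, ({x | ε ≤ pc c x} ∩ {x | pc c x ≤ 1})) ∩ {x | ∑ c, pc c x = 1} := by
      ext x
      simp only [Set.mem_setOf_eq, Set.mem_inter_iff, Set.mem_iInter]
    rw [this]
    exact (MeasurableSet.iInter fun c =>
        (measurableSet_le measurable_const (hpcmeas c)).inter
          (measurableSet_le (hpcmeas c) measurable_const)).inter
      (measurableSet_eq_fun (Finset.measurable_sum _ fun c _ => hpcmeas c) measurable_const)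
  have hGae : ∀ᵐ x ∂(μ.map X), x ∈ G := by
    have h1 : ∀ᵐ x ∂(μ.map X), ∀ c, ε ≤ pc c x := ae_all_iff.mpr hεpc
    have h2 : ∀ᵐ x ∂(μ.map X), ∀ c, pc c x ≤ 1 := ae_all_iff.mpr h_le1
    filter_upwards [h1, h2, h_sum1] with x ha hb hc
    rw [hGdef]
    exact ⟨fun c => ⟨ha c, hb c⟩, hc⟩
  have hG0 : (μ.map X) Gᶜ = 0 := ae_iff.mp hGae
  -- some x in G, and M > 0
  have hxG : ∃ x, x ∈ G := by
    by_contra h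
    push_neg at h
    have h1 : ({x : 𝓧 | ¬ x ∈ G}) = Set.univ := by ext x; simp [h x]
    have h0 : (μ.map X) {x | ¬ x ∈ G} = 0 := ae_iff.mp hGae
    rw [h1, measure_univ] at h0
    exact one_ne_zero h0
  obtain ⟨x₀, hx₀⟩ := hxG
  have hMpos : 0 < M := by
    by_contra h
    have hM0 : M = 0 := by omega
    subst hM0
    have := (hGmem x₀ hx₀).2
    simpa using this
  have c₀ : Fin M := ⟨0, hMpos⟩
  have hε1 : ε ≤ 1 := le_trans ((hGmem x₀ hx₀).1 c₀).1 ((hGmem x₀ hx₀).1 c₀).2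
  have hB1 : 1 ≤ B := by
    refine le_trans ?_ (hBc c₀)
    have hic : ((μ (C ⁻¹' {c₀})).toReal)⁻¹ * (μ (C ⁻¹' {c₀})).toReal = 1 :=
      inv_mul_cancel₀ (hppos c₀).ne'
    nlinarith [hppos c₀, hple1 c₀, inv_nonneg.mpr (hppos c₀).le]
  -- ratio bounds on the good set
  have hrat : ∀ x ∈ G, ∀ c, ε ≤ pc c x / (μ (C ⁻¹' {c})).toReal
      ∧ pc c x / (μ (C ⁻¹' {c})).toReal ≤ B := by
    intro x hx c
    have h1 := ((hGmem x hx).1 c).1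
    have h2 := ((hGmem x hx).1 c).2
    constructor
    · have h3 : pc c x ≤ pc c x / (μ (C ⁻¹' {c})).toReal := by
        rw [le_div_iff₀ (hppos c)]
        nlinarith [hple1 c, hε.le]
      linarith
    · calc pc c x / (μ (C ⁻¹' {c})).toReal ≤ 1 / (μ (C ⁻¹' {c})).toReal := by
            gcongr
        _ = ((μ (C ⁻¹' {c})).toReal)⁻¹ := one_div _
        _ ≤ B := hBc c
  -- ν-mean of the ratio is 1 on the good set
  have hmean' : ∀ x ∈ G, ∫ c', (pc c' x / (μ (C ⁻¹' {c'})).toReal) ∂(μ.map C) = 1 := by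
    intro x hx
    rw [integral_fintype .of_finite]
    have h1 : ∀ c' : Fin M, (μ.map C).real {c'} • (pc c' x / (μ (C ⁻¹' {c'})).toReal)
        = pc c' x := by
      intro c'
      rw [map_measureReal_apply hC (measurableSet_singleton c'), measureReal_def, smul_eq_mul, mul_comm,
        div_mul_cancel₀ _ (hppos c').ne']
    rw [Finset.sum_congr rfl fun c' _ => h1 c']
    exact (hGmem x hx).2
  -- measurability of the density ratio on the product space
  have hrm : Measurable fun q : 𝓧 × Fin M => pc q.2 q.1 / (μ (C ⁻¹' {q.2})).toReal :=
    measurable_from_prod_countable_left fun c =>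
      show Measurable fun x : 𝓧 => pc c x / (μ (C ⁻¹' {c})).toReal from
        (hpcmeas c).div_const _
  -- a.e. goodness for the joint law
  have hρG0 : (μ.map fun ω => (X ω, C ω)) (Prod.fst ⁻¹' Gᶜ) = 0 := by
    rw [Measure.map_apply (hX.prodMk hC) (measurable_fst hGmeas.compl)]
    have h1 : ((fun ω => (X ω, C ω)) ⁻¹' (Prod.fst ⁻¹' Gᶜ)) = X ⁻¹' Gᶜ := rfl
    rw [h1, ← Measure.map_apply hX hGmeas.compl]
    exact hG0
  have hρae : ∀ᵐ z1 ∂(μ.map fun ω => (X ω, C ω)), z1.1 ∈ G := by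
    rw [ae_iff]
    exact hρG0
  -- the squeeze
  refine squeeze_zero_norm' ?_ (tendsto_const_div_atTop_nhds_zero_nat (B + B^2/ε))
  filter_upwards [eventually_ge_atTop 1] with N hN
  have hNcast : ((N : ℕ) : ℝ) = ((N - 1 : ℕ) : ℝ) + 1 := by
    have h : N - 1 + 1 = N := Nat.succ_pred_eq_of_pos hN
    rw [← h]
    push_cast
    ring
  haveI : IsProbabilityMeasure (Measure.pi fun _ : Fin (N - 1) => μ.map C) := by
    infer_instance
  -- a.e. goodness on the product
  have haeprod : ∀ᵐ z ∂((μ.map fun ω => (X ω, C ω)).prod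
      (Measure.pi fun _ : Fin (N - 1) => μ.map C)), z.1.1 ∈ G := by
    rw [ae_iff]
    have hset : {z : (𝓧 × Fin M) × (Fin (N-1) → Fin M) | ¬ z.1.1 ∈ G}
        = (Prod.fst ⁻¹' Gᶜ) ×ˢ (Set.univ : Set (Fin (N-1) → Fin M)) := by
      ext z
      simp [Set.mem_prod]
    rw [hset, Measure.prod_prod, measure_univ, mul_one]
    exact hρG0
  -- measurability of the integrand
  have hfm : Measurable (fun z : (𝓧 × Fin M) × (Fin (N-1) → Fin M) =>
      Real.log ((1/(N:ℝ)) * (pc z.1.2 z.1.1 / (μ (C ⁻¹' {z.1.2})).toReal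
        + ∑ j, pc (z.2 j) z.1.1 / (μ (C ⁻¹' {z.2 j})).toReal))) := by
    apply Real.measurable_log.comp
    apply Measurable.const_mul
    apply Measurable.add
    · exact hrm.comp measurable_fst
    · exact Finset.measurable_sum _ fun j _ => hrm.comp
        ((measurable_fst.comp measurable_fst).prodMk
          ((measurable_pi_apply j).comp measurable_snd))
  -- pointwise bounds for the average on the good set
  have hvb : ∀ (x : 𝓧), x ∈ G → ∀ (c : Fin M) (ω : Fin (N-1) → Fin M),
      ε ≤ (1/(N:ℝ)) * (pc c x / (μ (C ⁻¹' {c})).toReal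
          + ∑ j, pc (ω j) x / (μ (C ⁻¹' {ω j})).toReal)
      ∧ (1/(N:ℝ)) * (pc c x / (μ (C ⁻¹' {c})).toReal
          + ∑ j, pc (ω j) x / (μ (C ⁻¹' {ω j})).toReal) ≤ B := by
    intro x hx c ω
    rw [hNcast]
    exact aux_avg_bound ε B _ (fun j => pc (ω j) x / (μ (C ⁻¹' {ω j})).toReal)
      (hrat x hx c).1 (hrat x hx c).2
      (fun j => (hrat x hx (ω j)).1) (fun j => (hrat x hx (ω j)).2)
  -- integrability of the integrand on the product
  have hIntf : Integrable (fun z : (𝓧 × Fin M) × (Fin (N-1) → Fin M) =>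
      Real.log ((1/(N:ℝ)) * (pc z.1.2 z.1.1 / (μ (C ⁻¹' {z.1.2})).toReal
        + ∑ j, pc (z.2 j) z.1.1 / (μ (C ⁻¹' {z.2 j})).toReal)))
      ((μ.map fun ω => (X ω, C ω)).prod (Measure.pi fun _ : Fin (N - 1) => μ.map C)) := by
    refine Integrable.mono' (integrable_const (Real.log B - Real.log ε))
      hfm.aestronglyMeasurable ?_
    filter_upwards [haeprod] with z hz
    obtain ⟨hb1, hb2⟩ := hvb z.1.1 hz z.1.2 z.2
    exact aux_log_abs hε hε1 hB1 hb1 hb2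
  -- Fubini and the inner estimate
  rw [integral_prod _ hIntf]
  refine le_trans (norm_integral_le_of_norm_le_const (C := (B + B^2/ε)/((N:ℕ):ℝ)) ?_) ?_
  · filter_upwards [hρae] with z1 hz1
    rw [hNcast]
    exact aux_main (n := N - 1) (μ.map C)
      (fun c' => pc c' z1.1 / (μ (C ⁻¹' {c'})).toReal) z1.2 ε B hε
      (fun c' => (hrat z1.1 hz1 c').1) (fun c' => (hrat z1.1 hz1 c').2)
      (hmean' z1.1 hz1)
  · rw [probReal_univ]
    simp
end

section
/- If sup_{z ∈ S^{d_z−1}} | m_N(z) − η_c(z) | → 0 almost surely as N → ∞, then the plug-in centroid estimates converge almost surely to the class-conditional mean: f̂_N(c) → E[ η_c(Z) Z ] / E[ η_c(Z) ] = E[ Z | C = c ]. (Proposition 3: consistency of the estimator f̂ of the orthogonal projection f̄, given the uniform almost-sure consistency of the underlying posterior estimates.) -/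
open MeasureTheory ProbabilityTheory Filter
open scoped Topology

/-- Proposition 3, consistency of the plug-in centroid estimator:
for i.i.d. pairs `(Z_j, C_j)` with `Z_j` on the unit sphere `S^{d_z-1}`, if the random
posterior estimates `m_N` converge to the posterior `η_c` uniformly on the sphere, almost
surely, then the plug-in centroid estimates
`f̂_N(c) = (Σ_{j≤N} m_N(Z_j) • Z_j) / (Σ_{j≤N} m_N(Z_j))` converge almost surely to
`E[η_c(Z) Z] / E[η_c(Z)] = E[Z | C = c]`. -/
theorem stmt_11 {Ω : Type*} [MeasurableSpace Ω] (μ : Measure Ω) [IsProbabilityMeasure μ]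
    {dz : ℕ} (hdz : 0 < dz) {𝒞 : Type*} [MeasurableSpace 𝒞] [MeasurableSingletonClass 𝒞]
    [Finite 𝒞]
    (Z : ℕ → Ω → EuclideanSpace ℝ (Fin dz)) (C : ℕ → Ω → 𝒞)
    (Z₀ : Ω → EuclideanSpace ℝ (Fin dz)) (C₀ : Ω → 𝒞)
    (hZ : ∀ j, Measurable (Z j)) (hC : ∀ j, Measurable (C j))
    (hZ₀ : Measurable Z₀) (hC₀ : Measurable C₀)
    -- all the `Z_j` (and the reference `Z`) take values in the unit sphere
    (hZ₀sph : ∀ ω, ‖Z₀ ω‖ = 1) (hZsph : ∀ j ω, ‖Z j ω‖ = 1)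
    -- the pairs `(Z_j, C_j)` are i.i.d. copies of `(Z, C)`
    (hindep : iIndepFun (fun j ω => (Z j ω, C j ω)) μ)
    (hident : ∀ j, IdentDistrib (fun ω => (Z j ω, C j ω)) (fun ω => (Z₀ ω, C₀ ω)) μ μ)
    (c : 𝒞) (hc : 0 < μ (C₀ ⁻¹' {c}))
    -- `η` is a measurable version of the posterior `z ↦ P(C = c | Z = z)`
    (η : EuclideanSpace ℝ (Fin dz) → ℝ) (hηmeas : Measurable η)
    (hη01 : ∀ z, η z ∈ Set.Icc (0 : ℝ) 1)
    (hηver : ∀ A : Set (EuclideanSpace ℝ (Fin dz)), MeasurableSet A →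
      ∫ z in A, η z ∂(μ.map Z₀) = (μ (Z₀ ⁻¹' A ∩ C₀ ⁻¹' {c})).toReal)
    -- `m N` is a random function built from the first `N` samples, valued in `[0,1]`
    (m : ℕ → Ω → EuclideanSpace ℝ (Fin dz) → ℝ)
    (hm01 : ∀ N ω z, m N ω z ∈ Set.Icc (0 : ℝ) 1)
    -- uniform almost-sure consistency of the posterior estimates on the sphere
    (hunif : ∀ᵐ ω ∂μ, Tendsto
      (fun N => ⨆ z : Metric.sphere (0 : EuclideanSpace ℝ (Fin dz)) 1, |m N ω z - η z|)
      atTop (𝓝 0)) :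
    (∀ᵐ ω ∂μ, Tendsto
        (fun N => (∑ j ∈ Finset.range N, m N ω (Z j ω))⁻¹ •
          ∑ j ∈ Finset.range N, m N ω (Z j ω) • Z j ω)
        atTop (𝓝 ((∫ ω, η (Z₀ ω) ∂μ)⁻¹ • ∫ ω, η (Z₀ ω) • Z₀ ω ∂μ)))
    ∧ (∫ ω, η (Z₀ ω) ∂μ)⁻¹ • (∫ ω, η (Z₀ ω) • Z₀ ω ∂μ)
        = (μ (C₀ ⁻¹' {c})).toReal⁻¹ • ∫ ω in C₀ ⁻¹' {c}, Z₀ ω ∂μ := by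
  haveI : Nonempty (Fin dz) := ⟨⟨0, hdz⟩⟩
  have hηnn : ∀ z, 0 ≤ η z := fun z => (hη01 z).1
  have hηle : ∀ z, η z ≤ 1 := fun z => (hη01 z).2
  set s : Set Ω := C₀ ⁻¹' {c} with hs
  have hsmeas : MeasurableSet s := hC₀ (measurableSet_singleton c)
  -- the NNReal-valued density
  set f : EuclideanSpace ℝ (Fin dz) → NNReal := fun z => (η z).toNNReal with hf
  have hfmeas : Measurable f := hηmeas.real_toNNReal
  -- equality of the two measures on `ℝ^dz`
  have hmeq : ((μ.map Z₀).withDensity (fun z => (f z : ENNReal)))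
      = (μ.restrict s).map Z₀ := by
    ext A hA
    rw [withDensity_apply _ hA, Measure.map_apply hZ₀ hA,
      Measure.restrict_apply (hZ₀ hA)]
    have h1 : ∫ z in A, η z ∂(μ.map Z₀)
        = (∫⁻ z in A, (f z : ENNReal) ∂(μ.map Z₀)).toReal := by
      rw [integral_eq_lintegral_of_nonneg_ae (Filter.Eventually.of_forall (fun z => hηnn z))
        hηmeas.aestronglyMeasurable.restrict]
      congr 1
    have hfin1 : ∫⁻ z in A, (f z : ENNReal) ∂(μ.map Z₀) ≠ ⊤ := by
      have : ∫⁻ z in A, (f z : ENNReal) ∂(μ.map Z₀)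
          ≤ ∫⁻ _ in A, 1 ∂(μ.map Z₀) := by
        refine lintegral_mono fun z => ?_
        simp only [ENNReal.coe_le_one_iff]
        exact Real.toNNReal_le_one.mpr (hηle z)
      refine ne_top_of_le_ne_top ?_ this
      simp only [lintegral_one, Measure.restrict_apply MeasurableSet.univ, Set.univ_inter]
      exact ((measure_lt_top _ _)).ne
    have hfin2 : μ (Z₀ ⁻¹' A ∩ s) ≠ ⊤ := (measure_lt_top _ _).ne
    have := hηver A hA
    rw [h1] at this
    exact (ENNReal.toReal_eq_toReal_iff' hfin1 hfin2).mp this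
  -- the scalar identity : ∫ η(Z₀) = μ(s).toReal
  have hα : ∫ ω, η (Z₀ ω) ∂μ = (μ s).toReal := by
    have := hηver Set.univ MeasurableSet.univ
    simpa [Measure.restrict_univ, integral_map hZ₀.aemeasurable
      hηmeas.aestronglyMeasurable] using this
  -- the vector identity : ∫ η(Z₀) • Z₀ = ∫_s Z₀
  have hv : ∫ ω, η (Z₀ ω) • Z₀ ω ∂μ = ∫ ω in s, Z₀ ω ∂μ := by
    have hg : Measurable (fun z : EuclideanSpace ℝ (Fin dz) => η z • z) :=
      hηmeas.smul measurable_id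
    calc ∫ ω, η (Z₀ ω) • Z₀ ω ∂μ
        = ∫ z, η z • z ∂(μ.map Z₀) := by
          rw [integral_map hZ₀.aemeasurable hg.aestronglyMeasurable]
      _ = ∫ z, f z • z ∂(μ.map Z₀) := by
          refine integral_congr_ae (Filter.Eventually.of_forall fun z => ?_)
          simp [hf, NNReal.smul_def, Real.coe_toNNReal _ (hηnn z)]
      _ = ∫ z, z ∂((μ.map Z₀).withDensity (fun z => (f z : ENNReal))) := by
          rw [integral_withDensity_eq_integral_smul hfmeas]
      _ = ∫ z, z ∂((μ.restrict s).map Z₀) := by rw [hmeq]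
      _ = ∫ ω in s, Z₀ ω ∂μ :=
          integral_map (f := fun z => z) hZ₀.aemeasurable
            measurable_id.aestronglyMeasurable
  have hμs_pos : 0 < (μ s).toReal :=
    ENNReal.toReal_pos hc.ne' (measure_lt_top _ _).ne
  have hα_pos : 0 < ∫ ω, η (Z₀ ω) ∂μ := by rw [hα]; exact hμs_pos
  constructor
  · -- the almost sure convergence
    -- scalar SLLN for X j = η (Z j)
    set X : ℕ → Ω → ℝ := fun j ω => η (Z j ω) with hX
    set Y : ℕ → Ω → EuclideanSpace ℝ (Fin dz) := fun j ω => η (Z j ω) • Z j ω with hY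
    have hg1 : Measurable (fun p : EuclideanSpace ℝ (Fin dz) × 𝒞 => η p.1) :=
      hηmeas.comp measurable_fst
    have hg2 : Measurable (fun p : EuclideanSpace ℝ (Fin dz) × 𝒞 => η p.1 • p.1) :=
      (hηmeas.comp measurable_fst).smul measurable_fst
    have hXident : ∀ i, IdentDistrib (X i) (X 0) μ μ := fun i =>
      (((hident i).comp hg1).trans ((hident 0).comp hg1).symm)
    have hYident : ∀ i, IdentDistrib (Y i) (Y 0) μ μ := fun i =>
      (((hident i).comp hg2).trans ((hident 0).comp hg2).symm)
    have hXindep : Pairwise (Function.onFun (fun x1 x2 => IndepFun x1 x2 μ) X) := fun i j hij =>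
      (hindep.indepFun hij).comp hg1 hg1
    have hYindep : Pairwise (Function.onFun (fun x1 x2 => IndepFun x1 x2 μ) Y) := fun i j hij =>
      (hindep.indepFun hij).comp hg2 hg2
    have hXint : Integrable (X 0) μ := by
      refine Integrable.mono' (integrable_const (1:ℝ))
        ((hηmeas.comp (hZ 0)).aestronglyMeasurable) ?_
      refine Filter.Eventually.of_forall fun ω => ?_
      rw [Real.norm_eq_abs, abs_of_nonneg (hηnn _)]
      exact hηle _
    have hYint : Integrable (Y 0) μ := by
      refine Integrable.mono' (integrable_const (1:ℝ))
        ((hg2.comp ((hZ 0).prodMk (hC 0))).aestronglyMeasurable) ?_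
      refine Filter.Eventually.of_forall fun ω => ?_
      rw [norm_smul, hZsph 0 ω, mul_one, Real.norm_eq_abs, abs_of_nonneg (hηnn _)]
      exact hηle _
    have hXlim : ∫ ω, X 0 ω ∂μ = ∫ ω, η (Z₀ ω) ∂μ := ((hident 0).comp hg1).integral_eq
    have hYlim : ∫ ω, Y 0 ω ∂μ = ∫ ω, η (Z₀ ω) • Z₀ ω ∂μ := ((hident 0).comp hg2).integral_eq
    have hSLLN_X := strong_law_ae X hXint hXindep hXident
    have hSLLN_Y := strong_law_ae Y hYint hYindep hYident
    -- the key sup bound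
    haveI : Nontrivial (EuclideanSpace ℝ (Fin dz)) := by
      refine ⟨0, EuclideanSpace.single ⟨0, hdz⟩ 1, fun h => ?_⟩
      have := congrArg (fun v : EuclideanSpace ℝ (Fin dz) => v ⟨0, hdz⟩) h
      simp [EuclideanSpace.single_apply] at this
    set ε : ℕ → Ω → ℝ := fun N ω =>
      ⨆ z : Metric.sphere (0 : EuclideanSpace ℝ (Fin dz)) 1, |m N ω z - η z| with hε
    have hbdd : ∀ N ω, BddAbove (Set.range fun z :
        Metric.sphere (0 : EuclideanSpace ℝ (Fin dz)) 1 => |m N ω z - η z|) := by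
      intro N ω
      refine ⟨1, fun x hx => ?_⟩
      obtain ⟨z, rfl⟩ := hx
      have h1 := hm01 N ω z; have h2 := hη01 (z : EuclideanSpace ℝ (Fin dz))
      rw [abs_sub_le_iff]
      constructor <;> linarith [h1.1, h1.2, h2.1, h2.2]
    have hterm : ∀ N ω j, |m N ω (Z j ω) - η (Z j ω)| ≤ ε N ω := by
      intro N ω j
      exact le_ciSup (hbdd N ω) (⟨Z j ω, by
        simpa [mem_sphere_iff_norm] using hZsph j ω⟩ :
        Metric.sphere (0 : EuclideanSpace ℝ (Fin dz)) 1)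
    filter_upwards [hSLLN_X, hSLLN_Y, hunif] with ω h₁ h₂ h₃
    -- error bounds
    have hεnn : ∀ N, 0 ≤ ε N ω := fun N => le_trans (abs_nonneg _) (hterm N ω 0)
    have hSdiff : ∀ N : ℕ, |(N:ℝ)⁻¹ * (∑ j ∈ Finset.range N, m N ω (Z j ω))
        - (N:ℝ)⁻¹ * (∑ j ∈ Finset.range N, X j ω)| ≤ ε N ω := by
      intro N
      rw [← mul_sub, ← Finset.sum_sub_distrib, abs_mul, abs_inv, Nat.abs_cast]
      calc (N:ℝ)⁻¹ * |∑ j ∈ Finset.range N, (m N ω (Z j ω) - X j ω)|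
          ≤ (N:ℝ)⁻¹ * ∑ j ∈ Finset.range N, |m N ω (Z j ω) - X j ω| := by
            gcongr; exact Finset.abs_sum_le_sum_abs _ _
        _ ≤ (N:ℝ)⁻¹ * ∑ _j ∈ Finset.range N, ε N ω :=
            mul_le_mul_of_nonneg_left
              (Finset.sum_le_sum fun j _ => hterm N ω j) (by positivity)
        _ ≤ ε N ω := by
            rcases Nat.eq_zero_or_pos N with h | h
            · simpa [h] using hεnn 0
            · rw [Finset.sum_const, Finset.card_range, nsmul_eq_mul, ← mul_assoc,
                inv_mul_cancel₀ (by positivity : (N:ℝ) ≠ 0), one_mul]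
    have hTdiff : ∀ N : ℕ, ‖(N:ℝ)⁻¹ • (∑ j ∈ Finset.range N, m N ω (Z j ω) • Z j ω)
        - (N:ℝ)⁻¹ • (∑ j ∈ Finset.range N, Y j ω)‖ ≤ ε N ω := by
      intro N
      rw [← smul_sub, ← Finset.sum_sub_distrib, norm_smul, norm_inv,
        Real.norm_natCast]
      calc (N:ℝ)⁻¹ * ‖∑ j ∈ Finset.range N, (m N ω (Z j ω) • Z j ω - Y j ω)‖
          ≤ (N:ℝ)⁻¹ * ∑ j ∈ Finset.range N, ‖m N ω (Z j ω) • Z j ω - Y j ω‖ := by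
            gcongr; exact norm_sum_le _ _
        _ ≤ (N:ℝ)⁻¹ * ∑ _j ∈ Finset.range N, ε N ω :=
            mul_le_mul_of_nonneg_left
              (Finset.sum_le_sum fun j _ => by
                rw [hY, ← sub_smul, norm_smul, hZsph j ω, mul_one, Real.norm_eq_abs]
                exact hterm N ω j) (by positivity)
        _ ≤ ε N ω := by
            rcases Nat.eq_zero_or_pos N with h | h
            · simpa [h] using hεnn 0
            · rw [Finset.sum_const, Finset.card_range, nsmul_eq_mul, ← mul_assoc,
                inv_mul_cancel₀ (by positivity : (N:ℝ) ≠ 0), one_mul]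
    -- limits of the normalized sums
    have hS : Tendsto (fun N : ℕ => (N:ℝ)⁻¹ * (∑ j ∈ Finset.range N, m N ω (Z j ω)))
        atTop (𝓝 (∫ ω, η (Z₀ ω) ∂μ)) := by
      have hdiff : Tendsto (fun N : ℕ => (N:ℝ)⁻¹ * (∑ j ∈ Finset.range N, m N ω (Z j ω))
          - (N:ℝ)⁻¹ * (∑ j ∈ Finset.range N, X j ω)) atTop (𝓝 0) :=
        squeeze_zero_norm (fun N => hSdiff N) h₃
      have h₁' : Tendsto (fun N : ℕ => (N:ℝ)⁻¹ * (∑ j ∈ Finset.range N, X j ω))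
          atTop (𝓝 (∫ ω, η (Z₀ ω) ∂μ)) := by
        rw [← hXlim]
        simpa [smul_eq_mul] using h₁
      have := hdiff.add h₁'
      simpa using this
    have hT : Tendsto (fun N : ℕ => (N:ℝ)⁻¹ • (∑ j ∈ Finset.range N, m N ω (Z j ω) • Z j ω))
        atTop (𝓝 (∫ ω, η (Z₀ ω) • Z₀ ω ∂μ)) := by
      have hdiff : Tendsto (fun N : ℕ => (N:ℝ)⁻¹ • (∑ j ∈ Finset.range N, m N ω (Z j ω) • Z j ω)
          - (N:ℝ)⁻¹ • (∑ j ∈ Finset.range N, Y j ω)) atTop (𝓝 0) :=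
        squeeze_zero_norm (fun N => hTdiff N) h₃
      have h₂' : Tendsto (fun N : ℕ => (N:ℝ)⁻¹ • (∑ j ∈ Finset.range N, Y j ω))
          atTop (𝓝 (∫ ω, η (Z₀ ω) • Z₀ ω ∂μ)) := by
        rw [← hYlim]; exact h₂
      have := hdiff.add h₂'
      simpa using this
    -- combine
    have hfinal := (hS.inv₀ hα_pos.ne').smul hT
    refine hfinal.congr' ?_
    filter_upwards [eventually_ge_atTop 1] with N hN
    have hNne : (N:ℝ) ≠ 0 := by positivity
    rw [mul_inv, inv_inv, smul_smul, mul_assoc,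
      mul_comm ((∑ j ∈ Finset.range N, m N ω (Z j ω))⁻¹), ← mul_assoc,
      mul_inv_cancel₀ hNne, one_mul]
  · rw [hα, hv]
end
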